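/- arXiv:2502.17773 — 6 statements merged into one kernel-verified Lean document; each statement's English description precedes it below -/
import Mathlib

section
/- Fix α, δ ∈ (0,1) and r ∈ (0,1/2], and assume μ(t) ∈ [r, 1−r] for every t ∈ Ψ. Then there exist κ₀ = κ₀(α,δ,r) ∈ ℕ and c = c(α,δ,r) > 0, depending only on α, δ, r, such that for every integer κ ≥ κ₀: P^{⊗κ}({z ∈ Z^κ : q_{1−α}(z) ≤ c/κ}) ≥ 1 − δ. -/
open MeasureTheory
open scoped ENNReal

universe u v

/-- χ²-discrepancy between Bernoulli means: `(a - b)² / (b (1 - b))`, set to `∞`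
when `b ∈ {0, 1}`. -/
noncomputable def chiDiv (a b : ℝ) : ℝ≥0∞ :=
  if b = 0 ∨ b = 1 then ⊤ else ENNReal.ofReal ((a - b) ^ 2 / (b * (1 - b)))

/-- The `β`-quantile of the `[0,∞]`-valued function `g` under the measure `ν`. -/
noncomputable def quantileE {Ψ : Type u} [MeasurableSpace Ψ] (ν : Measure Ψ)
    (g : Ψ → ℝ≥0∞) (β : ℝ) : ℝ≥0∞ :=
  sInf {x : ℝ≥0∞ | ENNReal.ofReal β ≤ ν {t | g t ≤ x}}

lemma measurable_chiDiv : Measurable fun p : ℝ × ℝ => chiDiv p.1 p.2 := by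
  unfold chiDiv
  refine Measurable.ite ?_ measurable_const ?_
  · have : {p : ℝ × ℝ | p.2 = 0 ∨ p.2 = 1} = Prod.snd ⁻¹' ({0} ∪ {1}) := by
      ext p; simp only [Set.mem_setOf_eq, Set.mem_preimage, Set.mem_union, Set.mem_singleton_iff]
    rw [this]
    exact measurable_snd ((measurableSet_singleton 0).union (measurableSet_singleton 1))
  · exact ENNReal.measurable_ofReal.comp
      (((measurable_fst.sub measurable_snd).pow_const 2).div
        (measurable_snd.mul (measurable_const.sub measurable_snd)))


section StmtAux

variable {Z : Type v} [MeasurableSpace Z] (Pz : Measure Z) [IsProbabilityMeasure Pz]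



lemma pair_map_pi {κ : ℕ} {i j : Fin κ} (hij : i ≠ j) :
    (Measure.pi fun _ : Fin κ => Pz).map (fun z => (z i, z j)) = Pz.prod Pz := by
  refine (Measure.prod_eq fun s t hs ht => ?_).symm
  rw [Measure.map_apply (((measurable_pi_apply i).prodMk (measurable_pi_apply j))) (hs.prod ht)]
  have hpre : (fun z : Fin κ → Z => (z i, z j)) ⁻¹' (s ×ˢ t)
      = Set.pi Set.univ (fun k => if k = i then s else if k = j then t else Set.univ) := by
    ext z
    simp only [Set.mem_preimage, Set.mem_prod, Set.mem_pi, Set.mem_univ, true_implies]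
    constructor
    · rintro ⟨h1, h2⟩ k
      split_ifs with h h'
      · subst h; exact h1
      · subst h'; exact h2
      · trivial
    · intro h
      refine ⟨by simpa using h i, by simpa [hij.symm] using h j⟩
  rw [hpre, Measure.pi_pi]
  have hfac : ∀ k, Pz (if k = i then s else if k = j then t else Set.univ)
      = if k = i then Pz s else if k = j then Pz t else 1 := by
    intro k; split_ifs <;> simp
  rw [Finset.prod_congr rfl (fun k _ => hfac k)]
  rw [← Finset.prod_subset (Finset.subset_univ ({i, j} : Finset (Fin κ)))
    (fun k _ hk => ?_), Finset.prod_pair hij]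
  · simp [hij.symm]
  · simp only [Finset.mem_insert, Finset.mem_singleton, not_or] at hk
    simp [hk.1, hk.2]

lemma integrable_of_abs_le {W : Type*} [MeasurableSpace W] (μ : Measure W)
    [IsFiniteMeasure μ] {f : W → ℝ} (hf : Measurable f) {C : ℝ} (h : ∀ x, |f x| ≤ C) :
    Integrable f μ :=
  ⟨hf.aestronglyMeasurable,
    HasFiniteIntegral.of_bounded (C := C)
      (Filter.Eventually.of_forall fun x => by simpa [Real.norm_eq_abs] using h x)⟩

lemma integral_eval_mul {κ : ℕ} {i j : Fin κ} (hij : i ≠ j) (Y : Z → ℝ) (hY : Measurable Y) :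
    ∫ z : Fin κ → Z, Y (z i) * Y (z j) ∂(Measure.pi fun _ => Pz)
      = (∫ x, Y x ∂Pz) * ∫ x, Y x ∂Pz := by
  have h1 : ∫ z : Fin κ → Z, Y (z i) * Y (z j) ∂(Measure.pi fun _ => Pz)
      = ∫ p : Z × Z, Y p.1 * Y p.2 ∂(Pz.prod Pz) := by
    have key := integral_map (μ := Measure.pi fun _ : Fin κ => Pz)
      (φ := fun z => (z i, z j)) (f := fun p : Z × Z => Y p.1 * Y p.2)
      (((measurable_pi_apply i).prodMk (measurable_pi_apply j)).aemeasurable)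
      (by
        rw [pair_map_pi Pz hij]
        exact ((hY.comp measurable_fst).mul (hY.comp measurable_snd)).aestronglyMeasurable)
    rw [pair_map_pi Pz hij] at key
    exact key.symm
  rw [h1, integral_prod_mul]

lemma sq_sum_integral_le {κ : ℕ} (Y : Z → ℝ) (hY : Measurable Y)
    (hYb : ∀ x, |Y x| ≤ 1) (hY0 : ∫ x, Y x ∂Pz = 0) :
    ∫ z : Fin κ → Z, (∑ i, Y (z i)) ^ 2 ∂(Measure.pi fun _ => Pz) ≤ κ := by
  have hmeas : ∀ i : Fin κ, Measurable fun z : Fin κ → Z => Y (z i) :=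
    fun i => hY.comp (measurable_pi_apply i)
  have hint : ∀ i j : Fin κ,
      Integrable (fun z : Fin κ → Z => Y (z i) * Y (z j)) (Measure.pi fun _ => Pz) := by
    intro i j
    refine integrable_of_abs_le _ ((hmeas i).mul (hmeas j)) (C := 1) fun z => ?_
    calc |Y (z i) * Y (z j)| = |Y (z i)| * |Y (z j)| := abs_mul _ _
      _ ≤ 1 * 1 := mul_le_mul (hYb _) (hYb _) (abs_nonneg _) zero_le_one
      _ = 1 := one_mul 1
  have hexp : ∫ z : Fin κ → Z, (∑ i, Y (z i)) ^ 2 ∂(Measure.pi fun _ => Pz)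
      = ∑ i : Fin κ, ∑ j : Fin κ, ∫ z : Fin κ → Z, Y (z i) * Y (z j)
          ∂(Measure.pi fun _ => Pz) := by
    have : ∀ z : Fin κ → Z, (∑ i, Y (z i)) ^ 2 = ∑ i : Fin κ, ∑ j : Fin κ, Y (z i) * Y (z j) := by
      intro z; rw [sq, Finset.sum_mul_sum]
    simp_rw [this]
    rw [integral_finset_sum _ fun i _ => integrable_finset_sum _ fun j _ => hint i j]
    exact Finset.sum_congr rfl fun i _ => integral_finset_sum _ fun j _ => hint i j
  rw [hexp]
  have hdiag : ∀ i : Fin κ, ∑ j : Fin κ, ∫ z : Fin κ → Z, Y (z i) * Y (z j)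
      ∂(Measure.pi fun _ => Pz) ≤ 1 := by
    intro i
    rw [Finset.sum_eq_single i
      (fun j _ hji => by rw [integral_eval_mul Pz (Ne.symm hji) Y hY, hY0, mul_zero])
      (fun h => absurd (Finset.mem_univ i) h)]
    calc ∫ z : Fin κ → Z, Y (z i) * Y (z i) ∂(Measure.pi fun _ => Pz)
        ≤ ∫ _ : Fin κ → Z, (1 : ℝ) ∂(Measure.pi fun _ => Pz) := by
          refine integral_mono (hint i i) (integrable_const 1) fun z => ?_
          have := hYb (z i)
          nlinarith [abs_nonneg (Y (z i)), sq_abs (Y (z i))]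
      _ = 1 := by simp
  calc ∑ i : Fin κ, ∑ j : Fin κ, ∫ z : Fin κ → Z, Y (z i) * Y (z j)
        ∂(Measure.pi fun _ => Pz) ≤ ∑ _i : Fin κ, (1 : ℝ) :=
        Finset.sum_le_sum fun i _ => hdiag i
    _ = κ := by simp

lemma mean_dev_measure_le {κ : ℕ} (hκ : 0 < κ) (f : Z → ℝ) (hf : Measurable f)
    (hfb : ∀ x, f x ∈ Set.Icc (0:ℝ) 1) {m : ℝ} (hm : 0 < m) :
    (Measure.pi fun _ : Fin κ => Pz)
      {z | m < ((∑ i, f (z i)) / κ - ∫ x, f x ∂Pz) ^ 2}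
      ≤ ENNReal.ofReal ((1 / κ) / m) := by
  have hκR : (0:ℝ) < κ := Nat.cast_pos.mpr hκ
  set μt := ∫ x, f x ∂Pz with hμt
  have hfint : Integrable f Pz :=
    integrable_of_abs_le Pz hf (C := 1) fun x => abs_le.mpr ⟨by linarith [(hfb x).1], (hfb x).2⟩
  have hμt0 : 0 ≤ μt := integral_nonneg fun x => (hfb x).1
  have hμt1 : μt ≤ 1 := by
    calc μt ≤ ∫ _, (1:ℝ) ∂Pz := integral_mono hfint (integrable_const 1) fun x => (hfb x).2
      _ = 1 := by simp
  set Y : Z → ℝ := fun x => f x - μt with hYdef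
  have hYmeas : Measurable Y := hf.sub measurable_const
  have hYb : ∀ x, |Y x| ≤ 1 := fun x =>
    abs_le.mpr ⟨by simp only [hYdef]; linarith [(hfb x).1], by simp only [hYdef]; linarith [(hfb x).2]⟩
  have hY0 : ∫ x, Y x ∂Pz = 0 := by
    simp only [hYdef]
    rw [integral_sub hfint (integrable_const μt), integral_const]
    simp
    exact sub_self _
  set g : (Fin κ → Z) → ℝ := fun z => ((∑ i, f (z i)) / κ - μt) ^ 2 with hgdef
  have hgeq : ∀ z : Fin κ → Z, g z = (∑ i, Y (z i)) ^ 2 / κ ^ 2 := by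
    intro z
    simp only [hgdef, hYdef, Finset.sum_sub_distrib, Finset.sum_const, Finset.card_univ,
      Fintype.card_fin, nsmul_eq_mul]
    field_simp
  have hgmeas : Measurable g := by
    apply Measurable.pow_const
    exact (Measurable.div (Finset.measurable_sum _ fun i _ =>
      hf.comp (measurable_pi_apply i)) measurable_const).sub measurable_const
  have hgint : Integrable g (Measure.pi fun _ => Pz) := by
    refine integrable_of_abs_le _ hgmeas (C := 1) fun z => ?_
    have h1 : 0 ≤ (∑ i, f (z i)) / κ := by
      apply div_nonneg _ hκR.le
      exact Finset.sum_nonneg fun i _ => (hfb (z i)).1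
    have h2 : (∑ i, f (z i)) / κ ≤ 1 := by
      rw [div_le_one hκR]
      calc ∑ i, f (z i) ≤ ∑ _i : Fin κ, (1:ℝ) := Finset.sum_le_sum fun i _ => (hfb (z i)).2
        _ = κ := by simp
    rw [abs_of_nonneg (sq_nonneg _)]
    show ((∑ i, f (z i)) / κ - μt) ^ 2 ≤ 1
    nlinarith
  have hgs : ∫ z, g z ∂(Measure.pi fun _ => Pz) ≤ 1 / κ := by
    have : ∫ z, g z ∂(Measure.pi fun _ => Pz)
        = (∫ z : Fin κ → Z, (∑ i, Y (z i)) ^ 2 ∂(Measure.pi fun _ => Pz)) / κ ^ 2 := by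
      simp_rw [hgeq]
      exact integral_div _ _
    rw [this]
    rw [div_le_div_iff₀ (by positivity) hκR]
    calc (∫ z : Fin κ → Z, (∑ i, Y (z i)) ^ 2 ∂(Measure.pi fun _ => Pz)) * κ
        ≤ κ * κ := by
          have := sq_sum_integral_le Pz (κ := κ) Y hYmeas hYb hY0
          nlinarith
      _ = 1 * κ^2 := by ring
  have hsub : {z : Fin κ → Z | m < g z}
      ⊆ {z : Fin κ → Z | ENNReal.ofReal m ≤ ENNReal.ofReal (g z)} :=
    fun z hz => ENNReal.ofReal_le_ofReal (le_of_lt hz)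
  calc (Measure.pi fun _ : Fin κ => Pz) {z | m < g z}
      ≤ (Measure.pi fun _ : Fin κ => Pz)
          {z | ENNReal.ofReal m ≤ ENNReal.ofReal (g z)} := measure_mono hsub
    _ ≤ (∫⁻ z, ENNReal.ofReal (g z) ∂(Measure.pi fun _ => Pz)) / ENNReal.ofReal m :=
        meas_ge_le_lintegral_div (ENNReal.measurable_ofReal.comp hgmeas).aemeasurable
          (by simp [hm]) ENNReal.ofReal_ne_top
    _ = ENNReal.ofReal (∫ z, g z ∂(Measure.pi fun _ => Pz)) / ENNReal.ofReal m := by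
        rw [ofReal_integral_eq_lintegral_ofReal hgint
          (Filter.Eventually.of_forall fun z => sq_nonneg _)]
    _ ≤ ENNReal.ofReal (1 / κ) / ENNReal.ofReal m :=
        ENNReal.div_le_div_right (ENNReal.ofReal_le_ofReal hgs) _
    _ = ENNReal.ofReal ((1 / κ) / m) := (ENNReal.ofReal_div_of_pos hm).symm
lemma slice_bound {κ : ℕ} (hκ : 0 < κ) {r c : ℝ} (hr : r ∈ Set.Ioc (0:ℝ) (1/2))
    (hc : 0 < c) (hκc : c / r ≤ (κ:ℝ)) (f : Z → ℝ) (hf : Measurable f)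
    (hfb : ∀ x, f x ∈ Set.Icc (0:ℝ) 1) (hμ : (∫ x, f x ∂Pz) ∈ Set.Icc r (1-r)) :
    (Measure.pi fun _ : Fin κ => Pz)
      {z | ENNReal.ofReal (c / κ) < chiDiv (∫ x, f x ∂Pz) ((∑ i, f (z i)) / κ)}
      ≤ ENNReal.ofReal (4 / (c * r)) := by
  have hκR : (0:ℝ) < κ := Nat.cast_pos.mpr hκ
  obtain ⟨hr0, hr2⟩ := hr
  set μt := ∫ x, f x ∂Pz with hμtdef
  set m : ℝ := c * r / (4 * κ) with hmdef
  have hm : 0 < m := by positivity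
  have hcκr : c ≤ κ * r := by
    rw [div_le_iff₀ hr0] at hκc; linarith
  have hmr : m ≤ r ^ 2 / 4 := by
    rw [hmdef, div_le_div_iff₀ (by positivity) (by norm_num)]
    nlinarith
  have hsub : {z : Fin κ → Z | ENNReal.ofReal (c / κ) < chiDiv μt ((∑ i, f (z i)) / κ)}
      ⊆ {z : Fin κ → Z | m < ((∑ i, f (z i)) / κ - μt) ^ 2} := by
    intro z hz
    by_contra hdev
    rw [Set.mem_setOf_eq, not_lt] at hdev
    set μh : ℝ := (∑ i, f (z i)) / κ with hμhdef
    have hdev2 : (μh - μt) ^ 2 ≤ r ^ 2 / 4 := le_trans hdev hmr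
    have h1 : r / 2 ≤ μh := by nlinarith [hμ.1, hμ.2]
    have h2 : μh ≤ 1 - r / 2 := by nlinarith [hμ.1, hμ.2]
    have hden : r / 4 ≤ μh * (1 - μh) := by
      nlinarith [mul_nonneg (by linarith : (0:ℝ) ≤ μh - r / 2)
        (by linarith : (0:ℝ) ≤ 1 - r / 2 - μh)]
    have hne : ¬(μh = 0 ∨ μh = 1) := by
      rintro (h | h) <;> rw [h] at h1 h2 <;> linarith
    have hval : (μt - μh) ^ 2 / (μh * (1 - μh)) ≤ c / κ := by
      have hnum : (μt - μh) ^ 2 ≤ m := by nlinarith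
      calc (μt - μh) ^ 2 / (μh * (1 - μh)) ≤ m / (r / 4) :=
            div_le_div₀ hm.le hnum (by positivity) hden
        _ = c / κ := by rw [hmdef]; field_simp
    rw [Set.mem_setOf_eq] at hz
    rw [chiDiv, if_neg hne] at hz
    exact absurd (ENNReal.ofReal_le_ofReal hval) (not_le.mpr hz)
  calc (Measure.pi fun _ : Fin κ => Pz)
        {z | ENNReal.ofReal (c / κ) < chiDiv μt ((∑ i, f (z i)) / κ)}
      ≤ (Measure.pi fun _ : Fin κ => Pz)
          {z | m < ((∑ i, f (z i)) / κ - μt) ^ 2} := measure_mono hsub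
    _ ≤ ENNReal.ofReal ((1 / κ) / m) := mean_dev_measure_le Pz hκ f hf hfb hm
    _ = ENNReal.ofReal (4 / (c * r)) := by
        congr 1
        rw [hmdef]
        field_simp

end StmtAux

/-- with probability at least `1 - δ` over `κ ≥ κ₀` i.i.d. hidden profiles,
the `(1-α)`-quantile (over questions) of the χ²-discrepancy between the true mean
`μ(t)` and the hidden-pool mean `μ̂_κ(z, t)` is at most `c/κ`, where `κ₀` and `c`
depend only on `α, δ, r`. -/
theorem stmt4 (α δ r : ℝ) (hα : α ∈ Set.Ioo (0 : ℝ) 1) (hδ : δ ∈ Set.Ioo (0 : ℝ) 1)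
    (hr : r ∈ Set.Ioc (0 : ℝ) (1 / 2)) :
    ∃ (κ₀ : ℕ) (c : ℝ), 0 < c ∧
      ∀ (Ψ : Type u) (_ : MeasurableSpace Ψ) (Z : Type v) (_ : MeasurableSpace Z)
        (Pq : Measure Ψ) (Pz : Measure Z),
        IsProbabilityMeasure Pq → IsProbabilityMeasure Pz →
      ∀ F : Z × Ψ → ℝ, Measurable F → (∀ zt, F zt ∈ Set.Icc (0 : ℝ) 1) →
        (∀ t : Ψ, (∫ zz, F (zz, t) ∂Pz) ∈ Set.Icc r (1 - r)) →
      ∀ κ : ℕ, κ₀ ≤ κ →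
        ENNReal.ofReal (1 - δ) ≤
          (Measure.pi fun _ : Fin κ => Pz)
            {zv | quantileE Pq
                (fun t =>
                  chiDiv (∫ zz, F (zz, t) ∂Pz) ((∑ i, F (zv i, t)) / κ))
                (1 - α)
              ≤ ENNReal.ofReal (c / κ)} := by
  obtain ⟨hα0, hα1⟩ := hα
  obtain ⟨hδ0, hδ1⟩ := hδ
  have hr0 := hr.1
  set c : ℝ := 4 / (α * δ * r) with hcdef
  have hc : 0 < c := by positivity
  refine ⟨max 1 ⌈c / r⌉₊, c, hc, ?_⟩
  intro Ψ mΨ Z mZ Pq Pz hPq hPz F hF hFb hμ κ hκ₀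
  have hκ1 : 0 < κ := le_trans (le_max_left 1 _) hκ₀
  have hκR : (0:ℝ) < κ := Nat.cast_pos.mpr hκ1
  have hκc : c / r ≤ (κ:ℝ) := by
    calc c / r ≤ (⌈c / r⌉₊ : ℝ) := Nat.le_ceil _
      _ ≤ ((max 1 ⌈c / r⌉₊ : ℕ) : ℝ) := Nat.cast_le.mpr (le_max_right _ _)
      _ ≤ κ := Nat.cast_le.mpr hκ₀
  set Ppi := Measure.pi fun _ : Fin κ => Pz with hPpi
  haveI : IsProbabilityMeasure Ppi := by rw [hPpi]; infer_instance
  set μf : Ψ → ℝ := fun t => ∫ zz, F (zz, t) ∂Pz with hμf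
  have hμfmeas : Measurable μf :=
    (hF.stronglyMeasurable.integral_prod_left').measurable
  set μh : (Fin κ → Z) × Ψ → ℝ := fun p => (∑ i, F (p.1 i, p.2)) / κ with hμh
  have hμhmeas : Measurable μh :=
    (Finset.measurable_sum Finset.univ fun i _ =>
      hF.comp (((measurable_pi_apply i).comp measurable_fst).prodMk measurable_snd)).div
      measurable_const
  set S : Set ((Fin κ → Z) × Ψ) :=
    {p | ENNReal.ofReal (c / κ) < chiDiv (μf p.2) (μh p)} with hS
  have hSmeas : MeasurableSet S := by
    have h : Measurable fun p : (Fin κ → Z) × Ψ => chiDiv (μf p.2) (μh p) :=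
      measurable_chiDiv.comp ((hμfmeas.comp measurable_snd).prodMk hμhmeas)
    exact measurableSet_lt measurable_const h
  set B : (Fin κ → Z) → ℝ≥0∞ := fun z => Pq (Prod.mk z ⁻¹' S) with hB
  have hBmeas : Measurable B := measurable_measure_prodMk_left hSmeas
  have hBint : ∫⁻ z, B z ∂Ppi ≤ ENNReal.ofReal (α * δ) := by
    have h1 : ∫⁻ z, B z ∂Ppi = (Ppi.prod Pq) S := (Measure.prod_apply hSmeas).symm
    have h2 : (Ppi.prod Pq) S = ∫⁻ t, Ppi ((fun z => (z, t)) ⁻¹' S) ∂Pq :=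
      Measure.prod_apply_symm hSmeas
    rw [h1, h2]
    calc ∫⁻ t, Ppi ((fun z => (z, t)) ⁻¹' S) ∂Pq
        ≤ ∫⁻ _, ENNReal.ofReal (α * δ) ∂Pq := by
          refine lintegral_mono fun t => ?_
          have hslice : (fun z : Fin κ → Z => (z, t)) ⁻¹' S
              = {z : Fin κ → Z |
                  ENNReal.ofReal (c / κ) < chiDiv (μf t) ((∑ i, F (z i, t)) / κ)} := rfl
          rw [hslice]
          have hb := slice_bound Pz hκ1 hr hc hκc (fun zz => F (zz, t))
            (hF.comp (measurable_id.prodMk measurable_const)) (fun x => hFb (x, t)) (hμ t)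
          have h4 : 4 / (c * r) = α * δ := by
            rw [hcdef]
            field_simp
          rw [h4] at hb
          exact hb
      _ = ENNReal.ofReal (α * δ) := by simp
  have hmark : Ppi {z | ENNReal.ofReal α ≤ B z} ≤ ENNReal.ofReal δ := by
    have h2 : ENNReal.ofReal α * Ppi {z | ENNReal.ofReal α ≤ B z}
        ≤ ENNReal.ofReal α * ENNReal.ofReal δ := by
      calc ENNReal.ofReal α * Ppi {z | ENNReal.ofReal α ≤ B z}
          ≤ ∫⁻ z, B z ∂Ppi := mul_meas_ge_le_lintegral₀ hBmeas.aemeasurable _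
        _ ≤ ENNReal.ofReal (α * δ) := hBint
        _ = ENNReal.ofReal α * ENNReal.ofReal δ := ENNReal.ofReal_mul hα0.le
    exact (ENNReal.mul_le_mul_iff_right (by simp [hα0]) ENNReal.ofReal_ne_top).mp h2
  have hsub2 : {z : Fin κ → Z | ENNReal.ofReal α ≤ B z}ᶜ
      ⊆ {zv : Fin κ → Z | quantileE Pq
          (fun t => chiDiv (μf t) ((∑ i, F (zv i, t)) / κ)) (1 - α)
          ≤ ENNReal.ofReal (c / κ)} := by
    intro z hz
    rw [Set.mem_compl_iff, Set.mem_setOf_eq, not_le] at hz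
    have hBz : B z ≤ ENNReal.ofReal α := hz.le
    have hset : {t : Ψ | chiDiv (μf t) ((∑ i, F (z i, t)) / κ) ≤ ENNReal.ofReal (c / κ)}
        = (Prod.mk z ⁻¹' S)ᶜ := by
      ext t
      simp only [Set.mem_setOf_eq, Set.mem_compl_iff, Set.mem_preimage, hS, not_lt]
      exact Iff.rfl
    have hmble : MeasurableSet (Prod.mk z ⁻¹' S) := measurable_prodMk_left hSmeas
    have hkey : ENNReal.ofReal (1 - α)
        ≤ Pq {t : Ψ | chiDiv (μf t) ((∑ i, F (z i, t)) / κ) ≤ ENNReal.ofReal (c / κ)} := by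
      rw [hset, prob_compl_eq_one_sub hmble, ENNReal.ofReal_sub _ hα0.le, ENNReal.ofReal_one]
      exact tsub_le_tsub_left hBz 1
    show quantileE Pq (fun t => chiDiv (μf t) ((∑ i, F (z i, t)) / κ)) (1 - α)
        ≤ ENNReal.ofReal (c / κ)
    rw [quantileE]
    exact sInf_le hkey
  calc ENNReal.ofReal (1 - δ) = 1 - ENNReal.ofReal δ := by
        rw [ENNReal.ofReal_sub _ hδ0.le, ENNReal.ofReal_one]
    _ ≤ 1 - Ppi {z | ENNReal.ofReal α ≤ B z} := tsub_le_tsub_left hmark 1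
    _ = Ppi {z | ENNReal.ofReal α ≤ B z}ᶜ :=
        (prob_compl_eq_one_sub (hBmeas measurableSet_Ici)).symm
    _ ≤ _ := measure_mono hsub2
end

section
/- Fix q ∈ (0,1) and let x_1,…,x_k be i.i.d. Bernoulli(q) with sample mean x̄_k = (1/k)Σ_{i=1}^k x_i. Then for every α ∈ (0,1): P(KL(x̄_k ‖ q) ≤ log(2/α)/k) ≥ 1 − α. -/
open MeasureTheory ProbabilityTheory
open scoped ENNReal

/-- Bernoulli distribution on `ℝ` with mean `p`. -/
noncomputable def bern (p : ℝ) : Measure ℝ :=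
  ENNReal.ofReal p • Measure.dirac 1 + ENNReal.ofReal (1 - p) • Measure.dirac 0

/-- Kullback–Leibler divergence between Bernoulli distributions `Ber(q)` and `Ber(p)`,
with the convention `0 * log 0 = 0` (automatic in Lean since `Real.log 0 = 0`). -/
noncomputable def klBer (q p : ℝ) : ℝ :=
  q * Real.log (q / p) + (1 - q) * Real.log ((1 - q) / (1 - p))

section Aux

lemma bern_prob {p : ℝ} (h0 : 0 ≤ p) (h1 : p ≤ 1) : IsProbabilityMeasure (bern p) := by
  constructor
  have h : bern p Set.univ = ENNReal.ofReal p * 1 + ENNReal.ofReal (1 - p) * 1 := by simp [bern]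
  rw [h, mul_one, mul_one, ← ENNReal.ofReal_add h0 (by linarith)]
  norm_num

lemma integral_bern {f : ℝ → ℝ} (hf : Measurable f) {p : ℝ} (h0 : 0 ≤ p) (h1 : p ≤ 1) :
    ∫ x, f x ∂(bern p) = p * f 1 + (1 - p) * f 0 := by
  have hd : ∀ a : ℝ, Integrable f (Measure.dirac a) := by
    intro a
    refine ⟨hf.aestronglyMeasurable, ?_⟩
    rw [HasFiniteIntegral, lintegral_dirac]
    exact ENNReal.coe_lt_top
  rw [bern, integral_add_measure ((hd 1).smul_measure ENNReal.ofReal_ne_top)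
    ((hd 0).smul_measure ENNReal.ofReal_ne_top), integral_smul_measure, integral_smul_measure,
    integral_dirac, integral_dirac, ENNReal.toReal_ofReal h0, ENNReal.toReal_ofReal (by linarith)]
  simp only [smul_eq_mul]

lemma bern_01 {p : ℝ} : bern p ({0, 1} : Set ℝ)ᶜ = 0 := by
  have hm : MeasurableSet ({0, 1} : Set ℝ) := (Set.toFinite _).measurableSet
  simp [bern, Measure.add_apply, Measure.smul_apply, Measure.dirac_apply' _ hm.compl,
    Set.indicator_of_notMem, Set.mem_compl_iff]

lemma integral_pi_pow (k : ℕ) (μ : Measure ℝ) [SigmaFinite μ] (f : ℝ → ℝ) :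
    ∫ x : Fin k → ℝ, ∏ i, f (x i) ∂(Measure.pi fun _ => μ) = (∫ x, f x ∂μ) ^ k := by
  letI : MeasureSpace ℝ := ⟨μ⟩
  haveI : SigmaFinite (volume : Measure ℝ) := ‹_›
  have h := MeasureTheory.integral_fintype_prod_eq_pow (ι := Fin k) f (μ := μ)
  simpa using h

lemma mem01 {y : ℝ} (h : y ∈ ({0, 1} : Set ℝ)) : 0 ≤ y ∧ y ≤ 1 := by
  rcases h with h | h
  · simp [h]
  · rw [Set.mem_singleton_iff] at h; simp [h]

noncomputable def glog (q : ℝ) : ℝ → ℝ := fun u =>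
  u * Real.log u + (1 - u) * Real.log (1 - u) - u * Real.log q - (1 - u) * Real.log (1 - q)

lemma klBer_eq_glog {q : ℝ} (hq0 : 0 < q) (hq1 : q < 1) {u : ℝ} (hu0 : 0 ≤ u) (hu1 : u ≤ 1) :
    klBer u q = glog q u := by
  have e1 : u * Real.log (u / q) = u * Real.log u - u * Real.log q := by
    rcases eq_or_lt_of_le hu0 with h | h
    · simp [← h]
    · rw [Real.log_div h.ne' hq0.ne']; ring
  have e2 : (1 - u) * Real.log ((1 - u) / (1 - q)) =
      (1 - u) * Real.log (1 - u) - (1 - u) * Real.log (1 - q) := by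
    rcases eq_or_lt_of_le hu1 with h | h
    · simp [h]
    · rw [Real.log_div (by linarith : (1:ℝ) - u ≠ 0) (by linarith : (1:ℝ) - q ≠ 0)]; ring
  rw [klBer, glog, e1, e2]; ring

lemma continuous_glog (q : ℝ) : Continuous (glog q) := by
  unfold glog
  exact ((Real.continuous_mul_log.add
    (Real.continuous_mul_log.comp (continuous_const.sub continuous_id))).sub
    (continuous_id.mul continuous_const)).sub
    ((continuous_const.sub continuous_id).mul continuous_const)

lemma hasDerivAt_glog (q : ℝ) {u : ℝ} (h0 : 0 < u) (h1 : u < 1) :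
    HasDerivAt (glog q) (Real.log u - Real.log (1 - u) - Real.log q + Real.log (1 - q)) u := by
  have h1u : (1 : ℝ) - u ≠ 0 := by linarith
  have d1 : HasDerivAt (fun u : ℝ => u * Real.log u) (Real.log u + 1) u :=
    Real.hasDerivAt_mul_log h0.ne'
  have dinner : HasDerivAt (fun u : ℝ => 1 - u) (-1) u := (hasDerivAt_id u).const_sub 1
  have d2 : HasDerivAt (fun u : ℝ => (1 - u) * Real.log (1 - u))
      ((Real.log (1 - u) + 1) * (-1)) u :=
    (Real.hasDerivAt_mul_log h1u).comp u dinner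
  have d3 : HasDerivAt (fun u : ℝ => u * Real.log q) (Real.log q) u := hasDerivAt_mul_const _
  have d4 : HasDerivAt (fun u : ℝ => (1 - u) * Real.log (1 - q)) ((-1) * Real.log (1 - q)) u :=
    dinner.mul_const _
  have h := ((d1.add d2).sub d3).sub d4
  exact h.congr_deriv (by ring)

lemma monotoneOn_klBer {q : ℝ} (hq0 : 0 < q) (hq1 : q < 1) :
    MonotoneOn (fun u => klBer u q) (Set.Icc q 1) := by
  have hmono : MonotoneOn (glog q) (Set.Icc q 1) := by
    apply monotoneOn_of_deriv_nonneg (convex_Icc q 1) (continuous_glog q).continuousOn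
    · intro u hu
      rw [interior_Icc] at hu
      exact ((hasDerivAt_glog q (lt_trans hq0 hu.1) hu.2).differentiableAt).differentiableWithinAt
    · intro u hu
      rw [interior_Icc] at hu
      rw [(hasDerivAt_glog q (lt_trans hq0 hu.1) hu.2).deriv]
      obtain ⟨hu1, hu2⟩ := hu
      have l1 : Real.log q ≤ Real.log u := Real.log_le_log hq0 hu1.le
      have l2 : Real.log (1 - u) ≤ Real.log (1 - q) :=
        Real.log_le_log (by linarith) (by linarith)
      linarith
  intro u hu v hv huv
  simp only
  rw [klBer_eq_glog hq0 hq1 (le_trans hq0.le hu.1) hu.2,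
    klBer_eq_glog hq0 hq1 (le_trans hq0.le hv.1) hv.2]
  exact hmono hu hv huv

lemma antitoneOn_klBer {q : ℝ} (hq0 : 0 < q) (hq1 : q < 1) :
    AntitoneOn (fun u => klBer u q) (Set.Icc 0 q) := by
  have hanti : AntitoneOn (glog q) (Set.Icc 0 q) := by
    apply antitoneOn_of_deriv_nonpos (convex_Icc 0 q) (continuous_glog q).continuousOn
    · intro u hu
      rw [interior_Icc] at hu
      exact ((hasDerivAt_glog q hu.1 (lt_trans hu.2 hq1)).differentiableAt).differentiableWithinAt
    · intro u hu
      rw [interior_Icc] at hu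
      rw [(hasDerivAt_glog q hu.1 (lt_trans hu.2 hq1)).deriv]
      obtain ⟨hu1, hu2⟩ := hu
      have l1 : Real.log u ≤ Real.log q := Real.log_le_log hu1 hu2.le
      have l2 : Real.log (1 - q) ≤ Real.log (1 - u) :=
        Real.log_le_log (by linarith) (by linarith)
      linarith
  intro u hu v hv huv
  simp only
  rw [klBer_eq_glog hq0 hq1 hu.1 (le_trans hu.2 hq1.le),
    klBer_eq_glog hq0 hq1 hv.1 (le_trans hv.2 hq1.le)]
  exact hanti hu hv huv

lemma klBer_self {q : ℝ} (hq0 : 0 < q) (hq1 : q < 1) : klBer q q = 0 := by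
  rw [klBer, div_self hq0.ne', div_self (by linarith : (1:ℝ) - q ≠ 0), Real.log_one]
  ring

lemma continuousOn_klBer {q : ℝ} (hq0 : 0 < q) (hq1 : q < 1) :
    ContinuousOn (fun u => klBer u q) (Set.Icc 0 1) := by
  refine ((continuous_glog q).continuousOn).congr ?_
  intro u hu
  exact klBer_eq_glog hq0 hq1 hu.1 hu.2

lemma chernoff_algebra {q a : ℝ} (hq0 : 0 < q) (hq1 : q < 1) (ha0 : 0 < a) (ha1 : a < 1)
    (k : ℕ) {t : ℝ} (ht : t = Real.log (a * (1 - q) / (q * (1 - a)))) :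
    Real.exp (-t * ((k : ℝ) * a)) * (q * Real.exp t + (1 - q)) ^ k =
      Real.exp (-((k : ℝ) * klBer a q)) := by
  have h1a : (0:ℝ) < 1 - a := by linarith
  have h1q : (0:ℝ) < 1 - q := by linarith
  have hpos : 0 < a * (1 - q) / (q * (1 - a)) := by positivity
  have het : Real.exp t = a * (1 - q) / (q * (1 - a)) := by rw [ht, Real.exp_log hpos]
  have hsum : q * Real.exp t + (1 - q) = (1 - q) / (1 - a) := by
    rw [het]; field_simp; ring
  have h2 : (1 - q) / (1 - a) = Real.exp (Real.log (1 - q) - Real.log (1 - a)) := by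
    rw [Real.exp_sub, Real.exp_log h1q, Real.exp_log h1a]
  rw [hsum, h2, ← Real.exp_nat_mul, ← Real.exp_add]
  congr 1
  have hta : t = Real.log a + Real.log (1 - q) - (Real.log q + Real.log (1 - a)) := by
    rw [ht, Real.log_div (by positivity : (0:ℝ) < a * (1 - q)).ne'
      (by positivity : (0:ℝ) < q * (1 - a)).ne',
      Real.log_mul ha0.ne' h1q.ne', Real.log_mul hq0.ne' h1a.ne']
  have hkl : klBer a q =
      a * (Real.log a - Real.log q) + (1 - a) * (Real.log (1 - a) - Real.log (1 - q)) := by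
    rw [klBer, Real.log_div ha0.ne' hq0.ne', Real.log_div h1a.ne' h1q.ne']
  rw [hta, hkl]; ring

lemma mgf_sum_bern {q : ℝ} (h0 : 0 ≤ q) (h1 : q ≤ 1) (k : ℕ) (t : ℝ) :
    mgf (fun f : Fin k → ℝ => ∑ i, f i) (Measure.pi fun _ : Fin k => bern q) t =
      (q * Real.exp t + (1 - q)) ^ k := by
  haveI := bern_prob h0 h1
  rw [mgf]
  have h : ∀ f : Fin k → ℝ, Real.exp (t * ∑ i, f i) = ∏ i, Real.exp (t * f i) := by
    intro f; rw [Finset.mul_sum, Real.exp_sum]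
  simp_rw [h]
  have hpow := integral_pi_pow k (bern q) (fun x => Real.exp (t * x))
  rw [hpow, integral_bern (show Measurable fun x : ℝ => Real.exp (t * x) from
    Real.measurable_exp.comp (measurable_id.const_mul t)) h0 h1]
  norm_num

lemma ae_mem_01 {q : ℝ} (h0 : 0 ≤ q) (h1 : q ≤ 1) (k : ℕ) :
    ∀ᵐ f ∂(Measure.pi fun _ : Fin k => bern q), ∀ i, f i ∈ ({0, 1} : Set ℝ) := by
  haveI := bern_prob h0 h1
  rw [MeasureTheory.ae_all_iff]
  intro i
  rw [ae_iff]
  exact Measure.pi_eval_preimage_null (μ := fun _ : Fin k => bern q) bern_01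

lemma integrable_exp_sum {q : ℝ} (h0 : 0 ≤ q) (h1 : q ≤ 1) (k : ℕ) (t : ℝ) :
    Integrable (fun f : Fin k → ℝ => Real.exp (t * ∑ i, f i))
      (Measure.pi fun _ : Fin k => bern q) := by
  haveI := bern_prob h0 h1
  have hmeas : Measurable fun f : Fin k → ℝ => Real.exp (t * ∑ i, f i) := by
    exact Real.measurable_exp.comp
      ((Finset.measurable_sum Finset.univ fun i _ => measurable_pi_apply i).const_mul t)
  refine Integrable.mono' (integrable_const (Real.exp (|t| * k)))
    hmeas.aestronglyMeasurable ?_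
  filter_upwards [ae_mem_01 h0 h1 k] with f hf
  have hb : ∀ i : Fin k, 0 ≤ f i ∧ f i ≤ 1 := fun i => mem01 (hf i)
  have hsum0 : 0 ≤ ∑ i, f i := Finset.sum_nonneg fun i _ => (hb i).1
  have hsumk : ∑ i, f i ≤ (k : ℝ) := by
    calc ∑ i, f i ≤ ∑ _i : Fin k, (1 : ℝ) := Finset.sum_le_sum fun i _ => (hb i).2
    _ = k := by simp
  rw [Real.norm_eq_abs, Real.abs_exp]
  apply Real.exp_le_exp.mpr
  calc t * ∑ i, f i ≤ |t * ∑ i, f i| := le_abs_self _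
    _ = |t| * |∑ i, f i| := abs_mul _ _
    _ = |t| * ∑ i, f i := by rw [abs_of_nonneg hsum0]
    _ ≤ |t| * k := by
        apply mul_le_mul_of_nonneg_left hsumk (abs_nonneg t)

lemma tail_upper {q : ℝ} (hq0 : 0 < q) (hq1 : q < 1) (k : ℕ) (hk : 1 ≤ k) {c : ℝ} (hc : 0 < c) :
    (Measure.pi fun _ : Fin k => bern q)
      {f | (∀ i, f i ∈ ({0, 1} : Set ℝ)) ∧ q ≤ (∑ i, f i) / k ∧ c < klBer ((∑ i, f i) / k) q} ≤
      ENNReal.ofReal (Real.exp (-((k : ℝ) * c))) := by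
  haveI := bern_prob hq0.le hq1.le
  haveI : IsProbabilityMeasure (Measure.pi fun _ : Fin k => bern q) := inferInstance
  set μ := Measure.pi fun _ : Fin k => bern q with hμ
  have hk0 : (0 : ℝ) < k := by exact_mod_cast hk
  -- mean is in [q, 1] for points of the set
  have hmem : ∀ f : Fin k → ℝ, (∀ i, f i ∈ ({0, 1} : Set ℝ)) → q ≤ (∑ i, f i) / k →
      (∑ i, f i) / k ∈ Set.Icc q 1 := by
    intro f hf hq'
    refine ⟨hq', ?_⟩
    rw [div_le_one hk0]
    calc ∑ i, f i ≤ ∑ _i : Fin k, (1 : ℝ) :=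
          Finset.sum_le_sum fun i _ => (mem01 (hf i)).2
      _ = k := by simp
  by_cases hc1 : klBer 1 q ≤ c
  · have hempty : {f : Fin k → ℝ | (∀ i, f i ∈ ({0, 1} : Set ℝ)) ∧ q ≤ (∑ i, f i) / k ∧
        c < klBer ((∑ i, f i) / k) q} = ∅ := by
      ext f
      simp only [Set.mem_setOf_eq, Set.mem_empty_iff_false, iff_false, not_and]
      intro hf hq' hkl
      have h1 : klBer ((∑ i, f i) / k) q ≤ klBer 1 q :=
        monotoneOn_klBer hq0 hq1 (hmem f hf hq') (Set.mem_Icc.mpr ⟨hq1.le, le_rfl⟩)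
          (hmem f hf hq').2
      linarith
    rw [hempty]
    simp
  · push_neg at hc1
    obtain ⟨a, haI, ha⟩ :=
      intermediate_value_Icc hq1.le
        ((continuousOn_klBer hq0 hq1).mono (Set.Icc_subset_Icc hq0.le le_rfl))
        (Set.mem_Icc.mpr ⟨by rw [klBer_self hq0 hq1]; exact hc.le, hc1.le⟩)
    have ha' : klBer a q = c := ha
    have haq : q < a := by
      rcases eq_or_lt_of_le haI.1 with h | h
      · exfalso; rw [← h, klBer_self hq0 hq1] at ha'; linarith
      · exact h
    have ha1 : a < 1 := by
      rcases eq_or_lt_of_le haI.2 with h | h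
      · exfalso; rw [h] at ha'; linarith
      · exact h
    set t := Real.log (a * (1 - q) / (q * (1 - a))) with htdef
    have ht : 0 ≤ t := by
      apply Real.log_nonneg
      rw [le_div_iff₀ (by nlinarith : (0:ℝ) < q * (1 - a))]
      nlinarith
    have hint := integrable_exp_sum hq0.le hq1.le k t
    have hcher := measure_ge_le_exp_mul_mgf (μ := μ) (X := fun f => ∑ i, f i)
      ((k : ℝ) * a) ht hint
    rw [mgf_sum_bern hq0.le hq1.le k t,
      chernoff_algebra hq0 hq1 (lt_trans hq0 haq) ha1 k htdef, ha'] at hcher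
    have hsub : {f : Fin k → ℝ | (∀ i, f i ∈ ({0, 1} : Set ℝ)) ∧ q ≤ (∑ i, f i) / k ∧
        c < klBer ((∑ i, f i) / k) q} ⊆ {f | (k : ℝ) * a ≤ ∑ i, f i} := by
      rintro f ⟨hf, hq', hkl⟩
      have hm := hmem f hf hq'
      have hlt : a < (∑ i, f i) / k := by
        by_contra hle
        push_neg at hle
        have h2 : klBer ((∑ i, f i) / k) q ≤ klBer a q :=
          monotoneOn_klBer hq0 hq1 hm ⟨haq.le, ha1.le⟩ hle
        rw [ha'] at h2
        linarith
      rw [Set.mem_setOf_eq, mul_comm]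
      rw [lt_div_iff₀ hk0] at hlt
      exact hlt.le
    calc μ _ ≤ μ {f | (k : ℝ) * a ≤ ∑ i, f i} := measure_mono hsub
      _ ≤ ENNReal.ofReal (Real.exp (-((k : ℝ) * c))) := by
          rw [← ENNReal.ofReal_toReal (measure_ne_top μ _)]
          exact ENNReal.ofReal_le_ofReal hcher

lemma tail_lower {q : ℝ} (hq0 : 0 < q) (hq1 : q < 1) (k : ℕ) (hk : 1 ≤ k) {c : ℝ} (hc : 0 < c) :
    (Measure.pi fun _ : Fin k => bern q)
      {f | (∀ i, f i ∈ ({0, 1} : Set ℝ)) ∧ (∑ i, f i) / k ≤ q ∧ c < klBer ((∑ i, f i) / k) q} ≤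
      ENNReal.ofReal (Real.exp (-((k : ℝ) * c))) := by
  haveI := bern_prob hq0.le hq1.le
  haveI : IsProbabilityMeasure (Measure.pi fun _ : Fin k => bern q) := inferInstance
  set μ := Measure.pi fun _ : Fin k => bern q with hμ
  have hk0 : (0 : ℝ) < k := by exact_mod_cast hk
  have hmem : ∀ f : Fin k → ℝ, (∀ i, f i ∈ ({0, 1} : Set ℝ)) → (∑ i, f i) / k ≤ q →
      (∑ i, f i) / k ∈ Set.Icc (0 : ℝ) q := by
    intro f hf hq'
    refine ⟨?_, hq'⟩
    apply div_nonneg _ hk0.le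
    exact Finset.sum_nonneg fun i _ => (mem01 (hf i)).1
  by_cases hc1 : klBer 0 q ≤ c
  · have hempty : {f : Fin k → ℝ | (∀ i, f i ∈ ({0, 1} : Set ℝ)) ∧ (∑ i, f i) / k ≤ q ∧
        c < klBer ((∑ i, f i) / k) q} = ∅ := by
      ext f
      simp only [Set.mem_setOf_eq, Set.mem_empty_iff_false, iff_false, not_and]
      intro hf hq' hkl
      have h1 : klBer ((∑ i, f i) / k) q ≤ klBer 0 q :=
        antitoneOn_klBer hq0 hq1 (Set.mem_Icc.mpr ⟨le_rfl, hq0.le⟩) (hmem f hf hq')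
          (hmem f hf hq').1
      linarith
    rw [hempty]
    simp
  · push_neg at hc1
    obtain ⟨a, haI, ha⟩ :=
      intermediate_value_Icc' hq0.le
        ((continuousOn_klBer hq0 hq1).mono (Set.Icc_subset_Icc le_rfl hq1.le))
        (Set.mem_Icc.mpr ⟨by rw [klBer_self hq0 hq1]; exact hc.le, hc1.le⟩)
    have ha' : klBer a q = c := ha
    have haq : a < q := by
      rcases eq_or_lt_of_le haI.2 with h | h
      · exfalso; rw [h, klBer_self hq0 hq1] at ha'; linarith
      · exact h
    have ha0 : 0 < a := by
      rcases eq_or_lt_of_le haI.1 with h | h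
      · exfalso; rw [← h] at ha'; linarith
      · exact h
    set t := Real.log (a * (1 - q) / (q * (1 - a))) with htdef
    have ht : t ≤ 0 := by
      apply Real.log_nonpos
      · apply div_nonneg (mul_nonneg ha0.le (by linarith)) (by nlinarith)
      · rw [div_le_one (by nlinarith : (0:ℝ) < q * (1 - a))]
        nlinarith
    have hint := integrable_exp_sum hq0.le hq1.le k t
    have hcher := measure_le_le_exp_mul_mgf (μ := μ) (X := fun f => ∑ i, f i)
      ((k : ℝ) * a) ht hint
    rw [mgf_sum_bern hq0.le hq1.le k t,
      chernoff_algebra hq0 hq1 ha0 (lt_trans haq hq1) k htdef, ha'] at hcher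
    have hsub : {f : Fin k → ℝ | (∀ i, f i ∈ ({0, 1} : Set ℝ)) ∧ (∑ i, f i) / k ≤ q ∧
        c < klBer ((∑ i, f i) / k) q} ⊆ {f | ∑ i, f i ≤ (k : ℝ) * a} := by
      rintro f ⟨hf, hq', hkl⟩
      have hm := hmem f hf hq'
      have hlt : (∑ i, f i) / k < a := by
        by_contra hle
        push_neg at hle
        have h2 : klBer ((∑ i, f i) / k) q ≤ klBer a q :=
          antitoneOn_klBer hq0 hq1 ⟨ha0.le, haq.le⟩ hm hle
        rw [ha'] at h2
        linarith
      rw [Set.mem_setOf_eq, mul_comm]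
      rw [div_lt_iff₀ hk0] at hlt
      exact hlt.le
    calc μ _ ≤ μ {f | ∑ i, f i ≤ (k : ℝ) * a} := measure_mono hsub
      _ ≤ ENNReal.ofReal (Real.exp (-((k : ℝ) * c))) := by
          rw [← ENNReal.ofReal_toReal (measure_ne_top μ _)]
          exact ENNReal.ofReal_le_ofReal hcher

end Aux

/-- Chernoff bound for Bernoulli sample means in KL form. -/
theorem stmt8 (q : ℝ) (hq : q ∈ Set.Ioo (0 : ℝ) 1) (k : ℕ) (hk : 1 ≤ k)
    {Ω : Type*} [MeasurableSpace Ω] (P : Measure Ω) [IsProbabilityMeasure P]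
    (x : Fin k → Ω → ℝ)
    (hlaw : Measure.map (fun ω => fun i => x i ω) P = Measure.pi fun _ : Fin k => bern q)
    (α : ℝ) (hα : α ∈ Set.Ioo (0 : ℝ) 1) :
    ENNReal.ofReal (1 - α) ≤
      P {ω | klBer ((∑ i, x i ω) / k) q ≤ Real.log (2 / α) / k} := by
  obtain ⟨hq0, hq1⟩ := hq
  obtain ⟨hα0, hα1⟩ := hα
  haveI := bern_prob hq0.le hq1.le
  haveI : IsProbabilityMeasure (Measure.pi fun _ : Fin k => bern q) := inferInstance
  have hk0 : (0 : ℝ) < k := by exact_mod_cast hk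
  set c := Real.log (2 / α) / (k:ℝ) with hcdef
  have hc : 0 < c := by
    apply div_pos _ hk0
    apply Real.log_pos
    rw [lt_div_iff₀ hα0]
    linarith
  -- measurability
  have hklm : Measurable fun u : ℝ => klBer u q := by
    unfold klBer
    exact (measurable_id.mul (Real.measurable_log.comp (measurable_id.div_const q))).add
      (((measurable_const.sub measurable_id)).mul
        (Real.measurable_log.comp ((measurable_const.sub measurable_id).div_const (1 - q))))
  have hSm : Measurable fun f : Fin k → ℝ => (∑ i, f i) / k :=
    (Finset.measurable_sum Finset.univ fun i _ => measurable_pi_apply i).div_const _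
  set B := {f : Fin k → ℝ | klBer ((∑ i, f i) / k) q ≤ c} with hBdef
  have hB : MeasurableSet B := measurableSet_le (hklm.comp hSm) measurable_const
  -- transfer to μ
  have hg : AEMeasurable (fun ω => fun i => x i ω) P := by
    by_contra h
    have h0 : (Measure.pi fun _ : Fin k => bern q) Set.univ = 1 := measure_univ
    rw [← hlaw, Measure.map_of_not_aemeasurable h] at h0
    simp at h0
  have hPB : P {ω | klBer ((∑ i, x i ω) / k) q ≤ c} =
      (Measure.pi fun _ : Fin k => bern q) B := by
    rw [← hlaw, Measure.map_apply_of_aemeasurable hg hB]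
    rfl
  rw [hPB]
  set μ := Measure.pi fun _ : Fin k => bern q with hμ
  -- bound on the complement
  have hcompl : μ Bᶜ ≤ ENNReal.ofReal α := by
    set U := {f : Fin k → ℝ | (∀ i, f i ∈ ({0, 1} : Set ℝ)) ∧ q ≤ (∑ i, f i) / k ∧
      c < klBer ((∑ i, f i) / k) q} with hUdef
    set L := {f : Fin k → ℝ | (∀ i, f i ∈ ({0, 1} : Set ℝ)) ∧ (∑ i, f i) / k ≤ q ∧
      c < klBer ((∑ i, f i) / k) q} with hLdef
    set bad := {f : Fin k → ℝ | ¬ ∀ i, f i ∈ ({0, 1} : Set ℝ)} with hbaddef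
    have hsub : Bᶜ ⊆ U ∪ L ∪ bad := by
      intro f hf
      rw [Set.mem_compl_iff, hBdef, Set.mem_setOf_eq, not_le] at hf
      by_cases hgood : ∀ i, f i ∈ ({0, 1} : Set ℝ)
      · rcases le_total q ((∑ i, f i) / k) with h | h
        · exact Or.inl (Or.inl ⟨hgood, h, hf⟩)
        · exact Or.inl (Or.inr ⟨hgood, h, hf⟩)
      · exact Or.inr hgood
    have hbad : μ bad = 0 := by
      have hsub2 : bad ⊆ ⋃ i : Fin k, Function.eval i ⁻¹' ({0, 1} : Set ℝ)ᶜ := by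
        intro f hf
        rw [hbaddef, Set.mem_setOf_eq] at hf
        push_neg at hf
        obtain ⟨i, hi⟩ := hf
        exact Set.mem_iUnion.mpr ⟨i, hi⟩
      refine measure_mono_null hsub2 (measure_iUnion_null fun i => ?_)
      exact Measure.pi_eval_preimage_null (μ := fun _ : Fin k => bern q) bern_01
    have hexp : Real.exp (-((k : ℝ) * c)) = α / 2 := by
      have h1 : -((k : ℝ) * c) = Real.log (α / 2) := by
        rw [hcdef, show -((k : ℝ) * (Real.log (2 / α) / k)) = -Real.log (2 / α) by
          field_simp, ← Real.log_inv, inv_div]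
      rw [h1, Real.exp_log (by linarith)]
    calc μ Bᶜ ≤ μ (U ∪ L ∪ bad) := measure_mono hsub
      _ ≤ μ (U ∪ L) + μ bad := measure_union_le _ _
      _ = μ (U ∪ L) := by rw [hbad, add_zero]
      _ ≤ μ U + μ L := measure_union_le _ _
      _ ≤ ENNReal.ofReal (Real.exp (-((k : ℝ) * c))) +
          ENNReal.ofReal (Real.exp (-((k : ℝ) * c))) :=
            add_le_add (tail_upper hq0 hq1 k hk hc) (tail_lower hq0 hq1 k hk hc)
      _ = ENNReal.ofReal α := by
          rw [hexp, ← ENNReal.ofReal_add (by linarith) (by linarith)]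
          norm_num
  -- conclude
  have hadd : μ B + μ Bᶜ = 1 := by
    rw [measure_add_measure_compl hB, measure_univ]
  have h1 : ENNReal.ofReal (1 - α) + ENNReal.ofReal α = 1 := by
    rw [← ENNReal.ofReal_add (by linarith) (by linarith)]
    norm_num
  refine (ENNReal.add_le_add_iff_right (measure_ne_top μ Bᶜ)).mp ?_
  rw [hadd]
  calc ENNReal.ofReal (1 - α) + μ Bᶜ ≤ ENNReal.ofReal (1 - α) + ENNReal.ofReal α :=
        add_le_add_right hcompl _
    _ = 1 := h1
end

section
/- For every x ∈ (0,1) and every b > 0, the Bernoulli KL-divergence ball {p ∈ (0,1) : KL(x ‖ p) ≤ b} is contained in the interval [x − R, x + R], where R = √(2x(1−x)b) + 2b. -/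
lemma klBer_hasDerivAt (x t : ℝ) (hx : x ∈ Set.Ioo (0:ℝ) 1) (ht : t ∈ Set.Ioo (0:ℝ) 1) :
    HasDerivAt (klBer x) ((t - x) / (t * (1 - t))) t := by
  obtain ⟨hx0, hx1⟩ := hx
  obtain ⟨ht0, ht1⟩ := ht
  have ht0' : t ≠ 0 := ne_of_gt ht0
  have ht1' : (1:ℝ) - t ≠ 0 := ne_of_gt (by linarith)
  have hG : HasDerivAt (fun p => (x * Real.log x - x * Real.log p)
      + ((1 - x) * Real.log (1 - x) - (1 - x) * Real.log (1 - p)))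
      ((t - x) / (t * (1 - t))) t := by
    have h1 : HasDerivAt (fun p : ℝ => Real.log p) (1 / t) t := by
      simpa using Real.hasDerivAt_log ht0'
    have h2 : HasDerivAt (fun p : ℝ => Real.log (1 - p)) (-(1 / (1 - t))) t := by
      have hinner : HasDerivAt (fun p : ℝ => 1 - p) (-1) t := by
        simpa using (hasDerivAt_id t).const_sub 1
      have := (Real.hasDerivAt_log ht1').comp t hinner
      exact this.congr_deriv (by ring)
    have h3 := ((h1.const_mul x).const_sub (x * Real.log x)).add
      ((h2.const_mul (1 - x)).const_sub ((1 - x) * Real.log (1 - x)))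
    refine h3.congr_deriv ?_
    field_simp
    ring
  apply hG.congr_of_eventuallyEq
  have hmem : Set.Ioo (0:ℝ) 1 ∈ nhds t := (isOpen_Ioo).mem_nhds ⟨ht0, ht1⟩
  filter_upwards [hmem] with p hp
  obtain ⟨hp0, hp1⟩ := hp
  unfold klBer
  rw [Real.log_div (ne_of_gt hx0) (ne_of_gt hp0),
    Real.log_div (by linarith : (1:ℝ) - x ≠ 0) (by linarith : (1:ℝ) - p ≠ 0)]
  ring

lemma integral_sub_const (a b c : ℝ) :
    ∫ t in a..b, (t - c) = ((b - c) ^ 2 - (a - c) ^ 2) / 2 := by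
  rw [intervalIntegral.integral_comp_sub_right (fun t => t) c, integral_id]

set_option maxHeartbeats 1000000 in
/-- the KL-divergence ball is contained in an empirical-Bernstein-type interval. -/
theorem stmt9 (x b : ℝ) (hx : x ∈ Set.Ioo (0 : ℝ) 1) (hb : 0 < b) :
    {p ∈ Set.Ioo (0 : ℝ) 1 | klBer x p ≤ b} ⊆
      Set.Icc (x - (Real.sqrt (2 * (x * (1 - x)) * b) + 2 * b))
              (x + (Real.sqrt (2 * (x * (1 - x)) * b) + 2 * b)) := by
  obtain ⟨hx0, hx1⟩ := hx
  intro p hp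
  obtain ⟨⟨hp0, hp1⟩, hkl⟩ := hp
  set v : ℝ := x * (1 - x) with hv
  have hv0 : 0 < v := by apply mul_pos hx0; linarith
  set d : ℝ := |p - x| with hd
  clear_value v d
  have hd0 : 0 ≤ d := hd ▸ abs_nonneg _
  have hsub : Set.uIcc x p ⊆ Set.Ioo (0:ℝ) 1 := by
    intro t ht
    rw [Set.mem_uIcc] at ht
    rcases ht with ⟨h1, h2⟩ | ⟨h1, h2⟩ <;> constructor <;> linarith
  -- integral representation
  have hderiv : ∀ t ∈ Set.uIcc x p,
      HasDerivAt (klBer x) ((t - x) / (t * (1 - t))) t :=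
    fun t ht => klBer_hasDerivAt x t ⟨hx0, hx1⟩ (hsub ht)
  have hcont : ContinuousOn (fun t : ℝ => (t - x) / (t * (1 - t))) (Set.uIcc x p) := by
    apply ContinuousOn.div
    · fun_prop
    · fun_prop
    · intro t ht
      obtain ⟨ht0, ht1⟩ := hsub ht
      have : (0:ℝ) < t * (1 - t) := by nlinarith
      exact ne_of_gt this
  have hint : IntervalIntegrable (fun t : ℝ => (t - x) / (t * (1 - t)))
      MeasureTheory.volume x p := hcont.intervalIntegrable
  have hrepr : klBer x p = ∫ t in x..p, (t - x) / (t * (1 - t)) := by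
    have := intervalIntegral.integral_eq_sub_of_hasDerivAt hderiv hint
    have h0 : klBer x x = 0 := by
      unfold klBer
      rw [div_self (ne_of_gt hx0), div_self (by linarith : (1:ℝ) - x ≠ 0), Real.log_one]
      ring
    rw [this, h0]; ring
  -- denominator bound on the interval
  have hden : ∀ t ∈ Set.uIcc x p, t * (1 - t) ≤ v + d := by
    intro t ht
    obtain ⟨ht0, ht1⟩ := hsub ht
    have habs : |t - x| ≤ d := by
      rw [Set.mem_uIcc] at ht
      rw [hd, abs_le]
      rcases ht with ⟨h1, h2⟩ | ⟨h1, h2⟩ <;>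
        rcases abs_cases (p - x) with ⟨he, _⟩ | ⟨he, _⟩ <;> constructor <;> nlinarith
    rw [abs_le] at habs
    nlinarith [habs.1, habs.2]
  have hvd0 : (0:ℝ) < v + d := by linarith
  -- key inequality : d^2 / (2*(v+d)) ≤ klBer x p
  have hkey : d ^ 2 / (2 * (v + d)) ≤ klBer x p := by
    rcases le_or_gt x p with hxp | hxp
    · -- p ≥ x, d = p - x
      have hdval : d = p - x := by rw [hd, abs_of_nonneg (by linarith)]
      have hmono : ∫ t in x..p, (t - x) / (v + d) ≤ ∫ t in x..p, (t - x) / (t * (1 - t)) := by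
        apply intervalIntegral.integral_mono_on hxp _ hint
        · intro t ht
          rw [Set.uIcc_of_le hxp] at hsub hden
          have h1 := hsub ht
          have h2 := hden t ht
          obtain ⟨ht0', ht1'⟩ := h1
          have hnum : 0 ≤ t - x := by
            obtain ⟨h, _⟩ := ht; linarith
          have hpos : (0:ℝ) < t * (1 - t) := by nlinarith
          rw [div_le_div_iff₀ hvd0 hpos]
          nlinarith
        · exact (ContinuousOn.div_const (by fun_prop) _).intervalIntegrable
      have hcomp : ∫ t in x..p, (t - x) / (v + d) = d ^ 2 / (2 * (v + d)) := by
        have : ∀ t : ℝ, (t - x) / (v + d) = (1 / (v + d)) * (t - x) := by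
          intro t; ring
        simp_rw [this]
        rw [intervalIntegral.integral_const_mul, integral_sub_const]
        have hne : v + d ≠ 0 := ne_of_gt hvd0
        rw [hdval]; field_simp; ring
      rw [hrepr]; rw [← hcomp]; exact hmono
    · -- p < x, d = x - p
      have hdval : d = x - p := by rw [hd, abs_of_nonpos (by linarith)]; ring
      have hple : p ≤ x := le_of_lt hxp
      have hint' : IntervalIntegrable (fun t : ℝ => (t - x) / (t * (1 - t)))
          MeasureTheory.volume p x := hint.symm
      have hmono : ∫ t in p..x, (t - x) / (t * (1 - t)) ≤ ∫ t in p..x, (t - x) / (v + d) := by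
        apply intervalIntegral.integral_mono_on hple hint'
        · exact (ContinuousOn.div_const (by fun_prop) _).intervalIntegrable
        · intro t ht
          rw [Set.uIcc_of_ge hple] at hsub hden
          have h1 := hsub ht
          have h2 := hden t ht
          obtain ⟨ht0', ht1'⟩ := h1
          have hnum : t - x ≤ 0 := by
            obtain ⟨_, h⟩ := ht; linarith
          have hpos : (0:ℝ) < t * (1 - t) := by nlinarith
          rw [div_le_div_iff₀ hpos hvd0]
          nlinarith
      have hcomp : ∫ t in p..x, (t - x) / (v + d) = -(d ^ 2 / (2 * (v + d))) := by
        have : ∀ t : ℝ, (t - x) / (v + d) = (1 / (v + d)) * (t - x) := by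
          intro t; ring
        simp_rw [this]
        rw [intervalIntegral.integral_const_mul, integral_sub_const]
        have hne : v + d ≠ 0 := ne_of_gt hvd0
        rw [hdval]; field_simp; ring
      have : klBer x p = -∫ t in p..x, (t - x) / (t * (1 - t)) := by
        rw [hrepr, intervalIntegral.integral_symm]
      rw [this]
      have := hmono.trans_eq hcomp
      linarith
  -- final algebra
  have hdb : d ≤ Real.sqrt (2 * v * b) + 2 * b := by
    set s : ℝ := Real.sqrt (2 * v * b) with hs
    have hs0 : 0 ≤ s := Real.sqrt_nonneg _
    have hs2 : s ^ 2 = 2 * v * b := Real.sq_sqrt (by positivity)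
    by_contra hcon
    push_neg at hcon
    have h1 : d ^ 2 ≤ b * (2 * (v + d)) := by
      have h2 := hkey.trans hkl
      rw [div_le_iff₀ (by positivity)] at h2
      linarith
    nlinarith [mul_pos (show (0:ℝ) < d - s by linarith) (show (0:ℝ) < d - 2*b - s by linarith)]
  have habs : |p - x| ≤ Real.sqrt (2 * v * b) + 2 * b := hd ▸ hdb
  rw [abs_le] at habs
  constructor <;> [linarith [habs.1]; linarith [habs.2]]
end

section
/- Fix α, δ ∈ (0,1). There exists a constant c' = c'(α,δ) > 0, depending only on α and δ, such that for every integer κ ≥ 1: P^{⊗κ}({z ∈ Z^κ : q^{KL}_{1−α}(z) ≤ c'/κ}) ≥ 1 − δ. -/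
open MeasureTheory
open scoped ENNReal

universe u v

/-- Extended Bernoulli KL divergence on `[0,1]`, with `KL(q ‖ p) = ∞` when `p ∈ {0,1}`, `q ≠ p`. -/
noncomputable def klBerE (q p : ℝ) : ℝ≥0∞ :=
  if (p = 0 ∧ q ≠ 0) ∨ (p = 1 ∧ q ≠ 1) then ⊤ else ENNReal.ofReal (klBer q p)

/-- KL is bounded by the chi-square divergence. -/
lemma klBer_le_chisq {q p : ℝ} (hq0 : 0 ≤ q) (hq1 : q ≤ 1) (hp0 : 0 < p) (hp1 : p < 1) :
    klBer q p ≤ (q - p) ^ 2 / (p * (1 - p)) := by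
  have hp1' : 0 < 1 - p := sub_pos.mpr hp1
  have h1 : q * Real.log (q / p) ≤ q * (q / p - 1) := by
    rcases eq_or_lt_of_le hq0 with h | h
    · simp [← h]
    · exact mul_le_mul_of_nonneg_left (Real.log_le_sub_one_of_pos (div_pos h hp0)) hq0
  have h2 : (1 - q) * Real.log ((1 - q) / (1 - p)) ≤ (1 - q) * ((1 - q) / (1 - p) - 1) := by
    rcases eq_or_lt_of_le (sub_nonneg.mpr hq1) with h | h
    · simp [← h]
    · exact mul_le_mul_of_nonneg_left
        (Real.log_le_sub_one_of_pos (div_pos h hp1')) (sub_nonneg.mpr hq1)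
  have key : q * (q / p - 1) + (1 - q) * ((1 - q) / (1 - p) - 1) = (q - p) ^ 2 / (p * (1 - p)) := by
    field_simp
    ring
  calc klBer q p ≤ q * (q / p - 1) + (1 - q) * ((1 - q) / (1 - p) - 1) := add_le_add h1 h2
    _ = (q - p) ^ 2 / (p * (1 - p)) := key

lemma measurable_klBerE : Measurable (fun qp : ℝ × ℝ => klBerE qp.1 qp.2) := by
  have hS : MeasurableSet {qp : ℝ × ℝ | (qp.2 = 0 ∧ qp.1 ≠ 0) ∨ (qp.2 = 1 ∧ qp.1 ≠ 1)} := by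
    apply MeasurableSet.union
    · exact (measurable_snd (measurableSet_singleton 0)).inter
        ((measurable_fst (measurableSet_singleton 0)).compl)
    · exact (measurable_snd (measurableSet_singleton 1)).inter
        ((measurable_fst (measurableSet_singleton 1)).compl)
  have hkl : Measurable (fun qp : ℝ × ℝ => ENNReal.ofReal (klBer qp.1 qp.2)) := by
    apply Measurable.ennreal_ofReal
    unfold klBer
    exact (measurable_fst.mul ((measurable_fst.div measurable_snd).log)).add
      (((measurable_const.sub measurable_fst)).mul
        (((measurable_const.sub measurable_fst).div (measurable_const.sub measurable_snd)).log))
  exact Measurable.ite hS measurable_const hkl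

/-- Variance bound for the empirical mean of `[0,1]`-valued i.i.d. variables. -/
lemma variance_mean_le {Z : Type v} [MeasurableSpace Z] (Pz : Measure Z)
    [IsProbabilityMeasure Pz] (Yf : Z → ℝ) (hY : Measurable Yf)
    (hY0 : ∀ zz, 0 ≤ Yf zz) (hY1 : ∀ zz, Yf zz ≤ 1) (κ : ℕ) (hκ : 1 ≤ κ) :
    ∫ z, ((∑ i : Fin κ, Yf (z i)) / κ - ∫ zz, Yf zz ∂Pz) ^ 2
        ∂(Measure.pi fun _ : Fin κ => Pz)
      ≤ (∫ zz, Yf zz ∂Pz) * (1 - ∫ zz, Yf zz ∂Pz) / κ := by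
  letI msZ : MeasureSpace Z := { toMeasurableSpace := inferInstance, volume := Pz }
  haveI : IsProbabilityMeasure (volume : Measure Z) := by
    show IsProbabilityMeasure Pz; infer_instance
  haveI : SigmaFinite (volume : Measure Z) := by
    show SigmaFinite Pz; infer_instance
  have hκR : (0 : ℝ) < κ := by exact_mod_cast hκ
  set P : Measure (Fin κ → Z) := Measure.pi fun _ : Fin κ => Pz with hP
  haveI : IsProbabilityMeasure P := by rw [hP]; infer_instance
  set p : ℝ := ∫ zz, Yf zz ∂Pz with hp
  have hInt : Integrable Yf Pz := by
    refine Integrable.mono' (integrable_const 1) hY.aestronglyMeasurable ?_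
    exact ae_of_all _ fun zz => by
      rw [Real.norm_eq_abs, abs_of_nonneg (hY0 zz)]; exact hY1 zz
  have hp0 : 0 ≤ p := integral_nonneg hY0
  have hp1 : p ≤ 1 := by
    have := integral_mono hInt (integrable_const 1) hY1
    simpa using this
  set Yc : Z → ℝ := fun zz => Yf zz - p with hYc
  have hYc_meas : Measurable Yc := hY.sub measurable_const
  have hYc_int : Integrable Yc Pz := hInt.sub (integrable_const p)
  have hYc_mean : ∫ zz, Yc zz ∂Pz = 0 := by
    rw [hYc]
    rw [integral_sub hInt (integrable_const p)]
    simp [hp]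
  have hYc_bd : ∀ zz, |Yc zz| ≤ 1 := by
    intro zz
    rw [abs_le]
    constructor <;> simp only [hYc] <;> nlinarith [hY0 zz, hY1 zz]
  have hYcc_int : Integrable (fun zz => Yc zz * Yc zz) Pz := by
    refine Integrable.mono' (integrable_const 1) (hYc_meas.mul hYc_meas).aestronglyMeasurable ?_
    exact ae_of_all _ fun zz => by
      rw [Real.norm_eq_abs, abs_mul]
      nlinarith [hYc_bd zz, abs_nonneg (Yc zz)]
  have hYY_int : Integrable (fun zz => Yf zz * Yf zz) Pz := by
    refine Integrable.mono' (integrable_const 1) (hY.mul hY).aestronglyMeasurable ?_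
    exact ae_of_all _ fun zz => by
      rw [Real.norm_eq_abs, abs_of_nonneg (mul_nonneg (hY0 zz) (hY0 zz))]
      nlinarith [hY0 zz, hY1 zz]
  -- variance of a single variable
  have hVc : ∫ zz, Yc zz * Yc zz ∂Pz ≤ p * (1 - p) := by
    have e1 : (fun zz => Yc zz * Yc zz)
        = fun zz => Yf zz * Yf zz - (2 * p) * Yf zz + p * p := by
      funext zz; simp only [hYc]; ring
    rw [e1]
    have hfg : Integrable (fun zz => Yf zz * Yf zz - 2 * p * Yf zz) Pz :=
      hYY_int.sub (hInt.const_mul (2 * p))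
    rw [integral_add hfg (integrable_const (p * p)),
      integral_sub hYY_int (hInt.const_mul (2 * p)), integral_const_mul]
    have h2 : ∫ zz, Yf zz * Yf zz ∂Pz ≤ p := by
      rw [hp]
      refine integral_mono hYY_int hInt fun zz => ?_
      nlinarith [hY0 zz, hY1 zz]
    simp only [integral_const, measure_univ, probReal_univ, ENNReal.toReal_one, smul_eq_mul, one_mul, ← hp]
    nlinarith
  set S : (Fin κ → Z) → ℝ := fun z => ∑ i, Yc (z i) with hS
  -- independence via product integrals
  set g : Fin κ → Fin κ → Fin κ → Z → ℝ :=
    fun i j k zz => (if k = i then Yc zz else 1) * (if k = j then Yc zz else 1) with hg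
  have hprod : ∀ i j (z : Fin κ → Z), Yc (z i) * Yc (z j) = ∏ k, g i j k (z k) := by
    intro i j z
    rw [hg]
    simp only
    rw [Finset.prod_mul_distrib]
    congr 1 <;> simp [Finset.prod_ite_eq']
  have hterm_int : ∀ i j : Fin κ,
      Integrable (fun z : Fin κ → Z => Yc (z i) * Yc (z j)) P := by
    intro i j
    refine Integrable.mono' (integrable_const 1)
      (((hYc_meas.comp (measurable_pi_apply i)).mul
        (hYc_meas.comp (measurable_pi_apply j))).aestronglyMeasurable) ?_
    exact ae_of_all _ fun z => by
      rw [Real.norm_eq_abs, abs_mul]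
      nlinarith [hYc_bd (z i), hYc_bd (z j), abs_nonneg (Yc (z i)), abs_nonneg (Yc (z j))]
  have hterm : ∀ i j : Fin κ,
      ∫ z, Yc (z i) * Yc (z j) ∂P
        = if i = j then ∫ zz, Yc zz * Yc zz ∂Pz else 0 := by
    intro i j
    have hPvol : P = (volume : Measure (Fin κ → Z)) := by
      rw [hP, volume_pi]
      rfl
    have e2 : ∫ z, Yc (z i) * Yc (z j) ∂P = ∏ k, ∫ zz, g i j k zz ∂Pz := by
      rw [hPvol]
      calc ∫ z : Fin κ → Z, Yc (z i) * Yc (z j)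
            = ∫ z : Fin κ → Z, ∏ k, g i j k (z k) := by
            congr 1; funext z; exact hprod i j z
        _ = ∏ k, ∫ zz : Z, g i j k zz := by
            rw [volume_pi]; exact integral_fintype_prod_eq_prod (g i j)
    rw [e2]
    by_cases hij : i = j
    · subst hij
      have h1 : ∀ k : Fin κ, k ≠ i → ∫ zz : Z, g i i k zz ∂Pz = 1 := by
        intro k hk; simp [hg, hk]
      have h2 : ∫ zz : Z, g i i i zz ∂Pz = ∫ zz, Yc zz * Yc zz ∂Pz := by
        simp [hg]
      rw [if_pos rfl, Finset.prod_eq_single i (fun k _ hk => h1 k hk)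
        (fun h => absurd (Finset.mem_univ i) h), h2]
    · simp only [if_neg hij]
      refine Finset.prod_eq_zero (Finset.mem_univ i) ?_
      have : g i j i = Yc := by
        funext zz; simp [hg, hij]
      rw [this, hYc_mean]
  have hSS : ∫ z, S z * S z ∂P = κ * ∫ zz, Yc zz * Yc zz ∂Pz := by
    have e3 : ∀ z : Fin κ → Z, S z * S z = ∑ i, ∑ j, Yc (z i) * Yc (z j) := by
      intro z; rw [hS]; exact Finset.sum_mul_sum _ _ _ _
    calc ∫ z, S z * S z ∂P = ∫ z, ∑ i, ∑ j, Yc (z i) * Yc (z j) ∂P := by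
          congr 1; funext z; exact e3 z
      _ = ∑ i, ∫ z, ∑ j, Yc (z i) * Yc (z j) ∂P := by
          refine integral_finset_sum _ fun i _ => ?_
          exact integrable_finset_sum _ fun j _ => hterm_int i j
      _ = ∑ i : Fin κ, ∑ j : Fin κ, ∫ z, Yc (z i) * Yc (z j) ∂P := by
          refine Finset.sum_congr rfl fun i _ => ?_
          exact integral_finset_sum _ fun j _ => hterm_int i j
      _ = ∑ i : Fin κ, ∑ j : Fin κ, if i = j then ∫ zz, Yc zz * Yc zz ∂Pz else 0 := by
          refine Finset.sum_congr rfl fun i _ => Finset.sum_congr rfl fun j _ => hterm i j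
      _ = ∑ _i : Fin κ, ∫ zz, Yc zz * Yc zz ∂Pz := by
          refine Finset.sum_congr rfl fun i _ => ?_
          simp
      _ = κ * ∫ zz, Yc zz * Yc zz ∂Pz := by
          rw [Finset.sum_const, Finset.card_univ, Fintype.card_fin, nsmul_eq_mul]
  have e4 : ∀ z : Fin κ → Z, ((∑ i : Fin κ, Yf (z i)) / κ - p) ^ 2 = S z * S z / κ ^ 2 := by
    intro z
    have hSz : S z = (∑ i : Fin κ, Yf (z i)) - κ * p := by
      rw [hS]
      simp only [hYc]
      rw [Finset.sum_sub_distrib, Finset.sum_const, Finset.card_univ, Fintype.card_fin,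
        nsmul_eq_mul]
    rw [hSz]
    field_simp
  calc ∫ z, ((∑ i : Fin κ, Yf (z i)) / κ - p) ^ 2 ∂P
      = ∫ z, S z * S z / κ ^ 2 ∂P := by congr 1; funext z; exact e4 z
    _ = (∫ z, S z * S z ∂P) / κ ^ 2 := integral_div _ _
    _ = (κ * ∫ zz, Yc zz * Yc zz ∂Pz) / κ ^ 2 := by rw [hSS]
    _ = (∫ zz, Yc zz * Yc zz ∂Pz) / κ := by
        field_simp
    _ ≤ p * (1 - p) / κ := by gcongr

/-- Per-question bound: the expected KL discrepancy is at most `1/κ`. -/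
lemma lintegral_klBerE_le {Z : Type v} [MeasurableSpace Z] (Pz : Measure Z)
    [IsProbabilityMeasure Pz] (Yf : Z → ℝ) (hY : Measurable Yf)
    (hY0 : ∀ zz, 0 ≤ Yf zz) (hY1 : ∀ zz, Yf zz ≤ 1) (κ : ℕ) (hκ : 1 ≤ κ) :
    ∫⁻ z, klBerE ((∑ i : Fin κ, Yf (z i)) / κ) (∫ zz, Yf zz ∂Pz)
        ∂(Measure.pi fun _ : Fin κ => Pz) ≤ ENNReal.ofReal (1 / κ) := by
  have hκR : (0 : ℝ) < κ := by exact_mod_cast hκ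
  set P : Measure (Fin κ → Z) := Measure.pi fun _ : Fin κ => Pz with hP
  haveI : IsProbabilityMeasure P := by rw [hP]; infer_instance
  set p : ℝ := ∫ zz, Yf zz ∂Pz with hp
  have hInt : Integrable Yf Pz := by
    refine Integrable.mono' (integrable_const 1) hY.aestronglyMeasurable ?_
    exact ae_of_all _ fun zz => by
      rw [Real.norm_eq_abs, abs_of_nonneg (hY0 zz)]; exact hY1 zz
  have hp0 : 0 ≤ p := integral_nonneg hY0
  have hp1 : p ≤ 1 := by
    have := integral_mono hInt (integrable_const 1) hY1
    simpa using this
  by_cases hp_eq0 : p = 0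
  · -- `F = 0` a.e., so the discrepancy vanishes a.e.
    have hae : ∀ᵐ zz ∂Pz, Yf zz = 0 := by
      have := (integral_eq_zero_iff_of_nonneg hY0 hInt).mp hp_eq0
      filter_upwards [this] with zz h using h
    have haeP : ∀ᵐ z ∂P, ∀ i, Yf (z i) = 0 := by
      rw [hP]
      refine Filter.eventually_all.2 fun i => ?_
      exact (Measure.tendsto_eval_ae_ae (μ := fun _ : Fin κ => Pz) (i := i)).eventually hae
    have : ∫⁻ z, klBerE ((∑ i : Fin κ, Yf (z i)) / κ) p ∂P = 0 := by
      have hmeas : Measurable (fun z : Fin κ → Z =>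
          klBerE ((∑ i : Fin κ, Yf (z i)) / (κ : ℝ)) p) :=
        measurable_klBerE.comp ((((Finset.measurable_sum Finset.univ fun i _ =>
          hY.comp (measurable_pi_apply i)).div_const _)).prodMk measurable_const)
      rw [lintegral_eq_zero_iff' hmeas.aemeasurable]
      filter_upwards [haeP] with z hz
      have : (∑ i : Fin κ, Yf (z i)) = 0 := Finset.sum_eq_zero fun i _ => hz i
      simp [this, hp_eq0, klBerE, klBer]
    rw [this]
    exact zero_le
  by_cases hp_eq1 : p = 1
  · -- `F = 1` a.e.
    have hae : ∀ᵐ zz ∂Pz, Yf zz = 1 := by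
      have h0 : ∫ zz, (1 - Yf zz) ∂Pz = 0 := by
        rw [integral_sub (integrable_const 1) hInt]
        simp [← hp, hp_eq1]
      have := (integral_eq_zero_iff_of_nonneg
        (fun zz => sub_nonneg.2 (hY1 zz)) ((integrable_const 1).sub hInt)).mp h0
      filter_upwards [this] with zz h
      have : (1 : ℝ) - Yf zz = 0 := h
      linarith
    have haeP : ∀ᵐ z ∂P, ∀ i, Yf (z i) = 1 := by
      rw [hP]
      refine Filter.eventually_all.2 fun i => ?_
      exact (Measure.tendsto_eval_ae_ae (μ := fun _ : Fin κ => Pz) (i := i)).eventually hae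
    have : ∫⁻ z, klBerE ((∑ i : Fin κ, Yf (z i)) / κ) p ∂P = 0 := by
      have hmeas : Measurable (fun z : Fin κ → Z =>
          klBerE ((∑ i : Fin κ, Yf (z i)) / (κ : ℝ)) p) :=
        measurable_klBerE.comp ((((Finset.measurable_sum Finset.univ fun i _ =>
          hY.comp (measurable_pi_apply i)).div_const _)).prodMk measurable_const)
      rw [lintegral_eq_zero_iff' hmeas.aemeasurable]
      filter_upwards [haeP] with z hz
      have hsum : (∑ i : Fin κ, Yf (z i)) = κ := by
        rw [Finset.sum_congr rfl fun i _ => hz i]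
        simp
      have hq : (∑ i : Fin κ, Yf (z i)) / κ = 1 := by
        rw [hsum]; field_simp
      simp [hq, hp_eq1, klBerE, klBer]
    rw [this]
    exact zero_le
  · -- main case `0 < p < 1`
    have hp_pos : 0 < p := lt_of_le_of_ne hp0 (Ne.symm hp_eq0)
    have hp_lt : p < 1 := lt_of_le_of_ne hp1 hp_eq1
    have hpp_pos : 0 < p * (1 - p) := mul_pos hp_pos (sub_pos.mpr hp_lt)
    set q : (Fin κ → Z) → ℝ := fun z => (∑ i : Fin κ, Yf (z i)) / κ with hq
    have hq0 : ∀ z, 0 ≤ q z := fun z =>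
      div_nonneg (Finset.sum_nonneg fun i _ => hY0 (z i)) hκR.le
    have hq1 : ∀ z, q z ≤ 1 := by
      intro z
      rw [hq]
      rw [div_le_one hκR]
      calc (∑ i : Fin κ, Yf (z i)) ≤ ∑ _i : Fin κ, (1 : ℝ) :=
            Finset.sum_le_sum fun i _ => hY1 (z i)
        _ = κ := by simp
    have hq_meas : Measurable q :=
      (Finset.measurable_sum Finset.univ fun i _ =>
        hY.comp (measurable_pi_apply i)).div_const _
    have hsq_meas : Measurable fun z => (q z - p) ^ 2 :=
      (hq_meas.sub measurable_const).pow_const 2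
    have hsq_int : Integrable (fun z => (q z - p) ^ 2) P := by
      refine Integrable.mono' (integrable_const 1) hsq_meas.aestronglyMeasurable ?_
      refine ae_of_all _ fun z => ?_
      rw [Real.norm_eq_abs, abs_of_nonneg (sq_nonneg _)]
      nlinarith [hq0 z, hq1 z, hp0, hp1]
    have hklE : ∀ z, klBerE (q z) p = ENNReal.ofReal (klBer (q z) p) := by
      intro z
      rw [klBerE, if_neg]
      push_neg
      exact ⟨fun h => absurd h hp_eq0, fun h => absurd h hp_eq1⟩
    calc ∫⁻ z, klBerE (q z) p ∂P
        = ∫⁻ z, ENNReal.ofReal (klBer (q z) p) ∂P := by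
          congr 1; funext z; exact hklE z
      _ ≤ ∫⁻ z, ENNReal.ofReal ((q z - p) ^ 2) * ENNReal.ofReal (1 / (p * (1 - p))) ∂P := by
          refine lintegral_mono fun z => ?_
          rw [← ENNReal.ofReal_mul (sq_nonneg _)]
          refine ENNReal.ofReal_le_ofReal ?_
          calc klBer (q z) p ≤ (q z - p) ^ 2 / (p * (1 - p)) :=
                klBer_le_chisq (hq0 z) (hq1 z) hp_pos hp_lt
            _ = (q z - p) ^ 2 * (1 / (p * (1 - p))) := by ring
      _ = (∫⁻ z, ENNReal.ofReal ((q z - p) ^ 2) ∂P) * ENNReal.ofReal (1 / (p * (1 - p))) :=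
          lintegral_mul_const _ hsq_meas.ennreal_ofReal
      _ = ENNReal.ofReal (∫ z, (q z - p) ^ 2 ∂P) * ENNReal.ofReal (1 / (p * (1 - p))) := by
          rw [ofReal_integral_eq_lintegral_ofReal hsq_int (ae_of_all _ fun z => sq_nonneg _)]
      _ ≤ ENNReal.ofReal (p * (1 - p) / κ) * ENNReal.ofReal (1 / (p * (1 - p))) := by
          refine mul_le_mul_of_nonneg_right (ENNReal.ofReal_le_ofReal ?_) (by positivity)
          exact variance_mean_le Pz Yf hY hY0 hY1 κ hκ
      _ = ENNReal.ofReal (1 / κ) := by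
          rw [← ENNReal.ofReal_mul (by positivity)]
          congr 1
          field_simp

/-- with probability at least `1 - δ` over `κ ≥ 1` i.i.d. hidden profiles,
the `(1-α)`-quantile (over questions) of the KL-discrepancy `KL(μ̂_κ(z,·) ‖ μ(·))`
is at most `c'/κ`, where `c'` depends only on `α` and `δ`. -/
theorem stmt10 (α δ : ℝ) (hα : α ∈ Set.Ioo (0 : ℝ) 1) (hδ : δ ∈ Set.Ioo (0 : ℝ) 1) :
    ∃ c' : ℝ, 0 < c' ∧
      ∀ (Ψ : Type u) (_ : MeasurableSpace Ψ) (Z : Type v) (_ : MeasurableSpace Z)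
        (Pq : Measure Ψ) (Pz : Measure Z),
        IsProbabilityMeasure Pq → IsProbabilityMeasure Pz →
      ∀ F : Z × Ψ → ℝ, Measurable F → (∀ zt, F zt ∈ Set.Icc (0 : ℝ) 1) →
      ∀ κ : ℕ, 1 ≤ κ →
        ENNReal.ofReal (1 - δ) ≤
          (Measure.pi fun _ : Fin κ => Pz)
            {zv | quantileE Pq
                (fun t => klBerE ((∑ i, F (zv i, t)) / κ) (∫ zz, F (zz, t) ∂Pz))
                (1 - α)
              ≤ ENNReal.ofReal (c' / κ)} := by
  obtain ⟨hα0, hα1⟩ := hα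
  obtain ⟨hδ0, hδ1⟩ := hδ
  refine ⟨1 / (α * δ), by positivity, ?_⟩
  intro Ψ mΨ Z mZ Pq Pz hPq hPz F hF hF01 κ hκ
  haveI := hPq
  haveI := hPz
  have hκR : (0 : ℝ) < κ := by exact_mod_cast hκ
  set P : Measure (Fin κ → Z) := Measure.pi fun _ : Fin κ => Pz with hPdef
  haveI : IsProbabilityMeasure P := by rw [hPdef]; infer_instance
  set μf : Ψ → ℝ := fun t => ∫ zz, F (zz, t) ∂Pz with hμf
  have hμf_meas : Measurable μf := by
    rw [hμf]
    exact hF.stronglyMeasurable.integral_prod_left'.measurable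
  set H : (Fin κ → Z) × Ψ → ℝ≥0∞ :=
    fun x => klBerE ((∑ i, F (x.1 i, x.2)) / κ) (μf x.2) with hH
  have hH_meas : Measurable H := by
    rw [hH]
    refine measurable_klBerE.comp (Measurable.prodMk ?_ (hμf_meas.comp measurable_snd))
    refine Measurable.div_const ?_ _
    exact Finset.measurable_sum Finset.univ fun i _ =>
      hF.comp (((measurable_pi_apply i).comp measurable_fst).prodMk measurable_snd)
  -- per-question bound
  have key : ∀ t, ∫⁻ z, H (z, t) ∂P ≤ ENNReal.ofReal (1 / κ) := by
    intro t
    have h0 : ∀ zz, 0 ≤ F (zz, t) := fun zz => (hF01 (zz, t)).1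
    have h1 : ∀ zz, F (zz, t) ≤ 1 := fun zz => (hF01 (zz, t)).2
    exact lintegral_klBerE_le Pz (fun zz => F (zz, t))
      (hF.comp measurable_prodMk_right) h0 h1 κ hκ
  set G : (Fin κ → Z) → ℝ≥0∞ := fun z => ∫⁻ t, H (z, t) ∂Pq with hG
  have hG_meas : Measurable G := by
    rw [hG]
    exact hH_meas.lintegral_prod_right'
  -- total expectation bound
  have htot : ∫⁻ z, G z ∂P ≤ ENNReal.ofReal (1 / κ) := by
    rw [hG]
    have hswap : ∫⁻ z, ∫⁻ t, H (z, t) ∂Pq ∂P = ∫⁻ t, ∫⁻ z, H (z, t) ∂P ∂Pq :=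
      lintegral_lintegral_swap hH_meas.aemeasurable
    rw [hswap]
    calc ∫⁻ t, ∫⁻ z, H (z, t) ∂P ∂Pq ≤ ∫⁻ _t, ENNReal.ofReal (1 / κ) ∂Pq :=
          lintegral_mono fun t => key t
      _ = ENNReal.ofReal (1 / κ) := by simp
  -- outer Markov
  set c1 : ℝ≥0∞ := ENNReal.ofReal (1 / (δ * κ)) with hc1
  have hc1_pos : (0 : ℝ) < 1 / (δ * κ) := by positivity
  have hc1_ne0 : c1 ≠ 0 := by
    rw [hc1]; simpa using ENNReal.ofReal_pos.mpr hc1_pos |>.ne'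
  have hc1_netop : c1 ≠ ⊤ := ENNReal.ofReal_ne_top
  have hmarkov : P {z | c1 ≤ G z} ≤ ENNReal.ofReal δ := by
    have h1 := mul_meas_ge_le_lintegral₀ (μ := P) hG_meas.aemeasurable c1
    have h2 : ∫⁻ z, G z ∂P ≤ c1 * ENNReal.ofReal δ := by
      refine htot.trans ?_
      rw [hc1, ← ENNReal.ofReal_mul (by positivity)]
      refine ENNReal.ofReal_le_ofReal ?_
      have heq : 1 / (δ * (κ : ℝ)) * δ = 1 / κ := by
        field_simp
      exact le_of_eq heq.symm
    have := h1.trans h2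
    exact (ENNReal.mul_le_mul_iff_right hc1_ne0 hc1_netop).mp this
  have hA : ENNReal.ofReal (1 - δ) ≤ P {z | G z ≤ c1} := by
    have hsplit : (1 : ℝ≥0∞) ≤ P {z | G z ≤ c1} + P {z | c1 < G z} := by
      have huniv : (Set.univ : Set (Fin κ → Z)) = {z | G z ≤ c1} ∪ {z | c1 < G z} := by
        ext z; simp [le_or_gt]
      calc (1 : ℝ≥0∞) = P Set.univ := (measure_univ (μ := P)).symm
        _ = P ({z | G z ≤ c1} ∪ {z | c1 < G z}) := by rw [← huniv]
        _ ≤ P {z | G z ≤ c1} + P {z | c1 < G z} := measure_union_le _ _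
    have hlt : P {z | c1 < G z} ≤ ENNReal.ofReal δ := by
      refine le_trans (measure_mono ?_) hmarkov
      intro z hz
      simp only [Set.mem_setOf_eq] at hz ⊢
      exact le_of_lt hz
    have : (1 : ℝ≥0∞) ≤ P {z | G z ≤ c1} + ENNReal.ofReal δ :=
      hsplit.trans (add_le_add_right hlt _)
    have hsub : ENNReal.ofReal (1 - δ) = 1 - ENNReal.ofReal δ := by
      rw [ENNReal.ofReal_sub _ hδ0.le, ENNReal.ofReal_one]
    rw [hsub]
    exact tsub_le_iff_right.mpr this
  -- on the good event, bound the quantile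
  refine le_trans hA (measure_mono ?_)
  intro z hz
  simp only [Set.mem_setOf_eq] at hz ⊢
  set c2 : ℝ≥0∞ := ENNReal.ofReal (1 / (α * δ) / κ) with hc2
  have hc2_pos : (0 : ℝ) < 1 / (α * δ) / κ := by positivity
  have hc2_ne0 : c2 ≠ 0 := by
    rw [hc2]; simpa using ENNReal.ofReal_pos.mpr hc2_pos |>.ne'
  have hc2_netop : c2 ≠ ⊤ := ENNReal.ofReal_ne_top
  have hsec : AEMeasurable (fun t => H (z, t)) Pq :=
    (hH_meas.comp measurable_prodMk_left).aemeasurable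
  have hinner : Pq {t | c2 ≤ H (z, t)} ≤ ENNReal.ofReal α := by
    have h1 := mul_meas_ge_le_lintegral₀ (μ := Pq) hsec c2
    have h2 : ∫⁻ t, H (z, t) ∂Pq ≤ c2 * ENNReal.ofReal α := by
      refine le_trans hz ?_
      rw [hc1, hc2, ← ENNReal.ofReal_mul (by positivity)]
      refine ENNReal.ofReal_le_ofReal ?_
      have heq : 1 / (α * δ) / (κ : ℝ) * α = 1 / (δ * κ) := by
        field_simp
      exact le_of_eq heq.symm
    have := h1.trans h2
    exact (ENNReal.mul_le_mul_iff_right hc2_ne0 hc2_netop).mp this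
  have hq_le : ENNReal.ofReal (1 - α) ≤ Pq {t | H (z, t) ≤ c2} := by
    have hsplit : (1 : ℝ≥0∞) ≤ Pq {t | H (z, t) ≤ c2} + Pq {t | c2 < H (z, t)} := by
      have huniv : (Set.univ : Set Ψ) = {t | H (z, t) ≤ c2} ∪ {t | c2 < H (z, t)} := by
        ext t; simp [le_or_gt]
      calc (1 : ℝ≥0∞) = Pq Set.univ := (measure_univ (μ := Pq)).symm
        _ = Pq ({t | H (z, t) ≤ c2} ∪ {t | c2 < H (z, t)}) := by rw [← huniv]
        _ ≤ Pq {t | H (z, t) ≤ c2} + Pq {t | c2 < H (z, t)} := measure_union_le _ _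
    have hlt : Pq {t | c2 < H (z, t)} ≤ ENNReal.ofReal α := by
      refine le_trans (measure_mono ?_) hinner
      intro t ht
      simp only [Set.mem_setOf_eq] at ht ⊢
      exact le_of_lt ht
    have : (1 : ℝ≥0∞) ≤ Pq {t | H (z, t) ≤ c2} + ENNReal.ofReal α :=
      hsplit.trans (add_le_add_right hlt _)
    have hsub : ENNReal.ofReal (1 - α) = 1 - ENNReal.ofReal α := by
      rw [ENNReal.ofReal_sub _ hα0.le, ENNReal.ofReal_one]
    rw [hsub]
    exact tsub_le_iff_right.mpr this
  exact sInf_le hq_le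
end

section
/- Let μ, μ^syn ∈ ℝ with μ ≠ μ^syn, and let α ∈ (0,1). For any integer k ≥ 1, let x_1,…,x_k be i.i.d. normal N(μ^syn, 1) and x̄_k = (1/k)Σ_{i=1}^k x_i. Then P(|x̄_k − μ| ≤ z_{α/2}/√k) < 1 − α; that is, the unscaled CLT interval [x̄_k − z_{α/2}/√k, x̄_k + z_{α/2}/√k] built from the shifted synthetic distribution fails to attain (1−α) coverage of μ for every sample size k. -/
open MeasureTheory ProbabilityTheory
open scoped ENNReal

section Auxiliary

open Real intervalIntegral Set
open scoped NNReal

lemma pdf_mul (m1 m2 t x : ℝ) (v1 v2 : ℝ≥0) (h1 : v1 ≠ 0) (h2 : v2 ≠ 0) :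
    gaussianPDFReal m1 v1 x * gaussianPDFReal (m2 + x) v2 t =
      gaussianPDFReal (m1 + m2) (v1 + v2) t *
        gaussianPDFReal ((m1 * v2 + (t - m2) * v1) / (v1 + v2)) (v1 * v2 / (v1 + v2)) x := by
  have hv1 : (0:ℝ) < v1 := lt_of_le_of_ne v1.coe_nonneg (by exact_mod_cast (Ne.symm h1))
  have hv2 : (0:ℝ) < v2 := lt_of_le_of_ne v2.coe_nonneg (by exact_mod_cast (Ne.symm h2))
  have hv12 : (0:ℝ) < (v1:ℝ) + v2 := by linarith
  simp only [gaussianPDFReal, NNReal.coe_add, NNReal.coe_div, NNReal.coe_mul]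
  rw [mul_mul_mul_comm, ← mul_inv, ← Real.sqrt_mul (by positivity),
    mul_mul_mul_comm ((√(2 * π * ((v1:ℝ) + v2)))⁻¹), ← mul_inv, ← Real.sqrt_mul (by positivity),
    ← Real.exp_add, ← Real.exp_add]
  congr 2
  · congr 1
    field_simp
  · field_simp
    ring

lemma gauss_conv (m1 m2 : ℝ) (v1 v2 : ℝ≥0) :
    Measure.map (fun p : ℝ × ℝ => p.1 + p.2) ((gaussianReal m1 v1).prod (gaussianReal m2 v2))
      = gaussianReal (m1 + m2) (v1 + v2) := by
  by_cases h1 : v1 = 0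
  · subst h1
    rw [gaussianReal_zero_var, Measure.dirac_prod, Measure.map_map (by fun_prop) (by fun_prop)]
    have : ((fun p : ℝ × ℝ => p.1 + p.2) ∘ Prod.mk m1) = (m1 + ·) := rfl
    rw [this, gaussianReal_map_const_add]
    rw [add_comm m2 m1, zero_add]
  by_cases h2 : v2 = 0
  · subst h2
    rw [gaussianReal_zero_var, Measure.prod_dirac, Measure.map_map (by fun_prop) (by fun_prop)]
    have : ((fun p : ℝ × ℝ => p.1 + p.2) ∘ (fun x => (x, m2))) = (· + m2) := rfl
    rw [this, gaussianReal_map_add_const, add_zero]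
  -- main case
  have hmeas : ∀ s : Set ℝ, MeasurableSet s →
      Measurable fun x => gaussianReal (m2 + x) v2 s := by
    intro s hs
    have : ∀ x, gaussianReal (m2 + x) v2 s = ∫⁻ t in s, gaussianPDF (m2 + x) v2 t := fun x =>
      gaussianReal_apply _ h2 s
    simp_rw [this]
    apply Measurable.lintegral_prod_right'
      (f := fun p : ℝ × ℝ => gaussianPDF (m2 + p.1) v2 p.2)
    simp only [gaussianPDF, gaussianPDFReal]
    fun_prop
  ext s hs
  rw [Measure.map_apply (by fun_prop) hs, Measure.prod_apply ((by fun_prop :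
    Measurable fun p : ℝ × ℝ => p.1 + p.2) hs)]
  have step1 : ∀ x : ℝ, (gaussianReal m2 v2) (Prod.mk x ⁻¹' ((fun p : ℝ × ℝ => p.1 + p.2) ⁻¹' s))
      = ∫⁻ t in s, gaussianPDF (m2 + x) v2 t := by
    intro x
    have : (Prod.mk x ⁻¹' ((fun p : ℝ × ℝ => p.1 + p.2) ⁻¹' s)) = (x + ·) ⁻¹' s := rfl
    rw [this, ← Measure.map_apply (by fun_prop) hs, gaussianReal_map_const_add,
      gaussianReal_apply _ h2 s]
  simp_rw [step1]
  rw [gaussianReal_of_var_ne_zero _ h1,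
    lintegral_withDensity_eq_lintegral_mul _ (measurable_gaussianPDF _ _)
      (by simpa [gaussianReal_apply _ h2] using hmeas s hs)]
  have hswap : ∫⁻ x, gaussianPDF m1 v1 x * ∫⁻ t in s, gaussianPDF (m2 + x) v2 t
      = ∫⁻ t in s, ∫⁻ x, gaussianPDF m1 v1 x * gaussianPDF (m2 + x) v2 t := by
    have hjm : AEMeasurable (Function.uncurry fun x t =>
        gaussianPDF m1 v1 x * gaussianPDF (m2 + x) v2 t) (volume.prod (volume.restrict s)) := by
      apply Measurable.aemeasurable
      simp only [Function.uncurry, gaussianPDF, gaussianPDFReal]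
      fun_prop
    rw [← lintegral_lintegral_swap hjm]
    congr 1 with x
    rw [lintegral_const_mul _ (measurable_gaussianPDF _ _)]
  calc ∫⁻ x, (gaussianPDF m1 v1 * fun x => ∫⁻ t in s, gaussianPDF (m2 + x) v2 t) x
      = ∫⁻ x, gaussianPDF m1 v1 x * ∫⁻ t in s, gaussianPDF (m2 + x) v2 t := rfl
    _ = ∫⁻ t in s, ∫⁻ x, gaussianPDF m1 v1 x * gaussianPDF (m2 + x) v2 t := hswap
    _ = ∫⁻ t in s, gaussianPDF (m1 + m2) (v1 + v2) t := by
        apply setLIntegral_congr_fun hs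
        intro t _
        have h12 : v1 * v2 / (v1 + v2) ≠ 0 :=
          div_ne_zero (mul_ne_zero h1 h2) (by simp [h1])
        simp only [gaussianPDF]
        calc ∫⁻ x, ENNReal.ofReal (gaussianPDFReal m1 v1 x)
                * ENNReal.ofReal (gaussianPDFReal (m2 + x) v2 t)
            = ∫⁻ x, ENNReal.ofReal (gaussianPDFReal (m1 + m2) (v1 + v2) t)
                * ENNReal.ofReal (gaussianPDFReal
                  ((m1 * v2 + (t - m2) * v1) / (v1 + v2)) (v1 * v2 / (v1 + v2)) x) := by
              congr 1 with x
              rw [← ENNReal.ofReal_mul (gaussianPDFReal_nonneg _ _ _), pdf_mul m1 m2 t x v1 v2 h1 h2,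
                ENNReal.ofReal_mul (gaussianPDFReal_nonneg _ _ _)]
          _ = ENNReal.ofReal (gaussianPDFReal (m1 + m2) (v1 + v2) t) := by
              rw [lintegral_const_mul _ (measurable_gaussianPDFReal _ _).ennreal_ofReal,
                lintegral_gaussianPDFReal_eq_one _ h12, mul_one]
    _ = gaussianReal (m1 + m2) (v1 + v2) s :=
        (gaussianReal_apply _ (by simp [h1]) s).symm

lemma pi_sum_gauss (m : ℝ) : ∀ n : ℕ,
    Measure.map (fun f : Fin n → ℝ => ∑ i, f i) (Measure.pi fun _ => gaussianReal m 1)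
      = gaussianReal (n * m) n := by
  intro n
  induction n with
  | zero =>
      rw [Measure.pi_of_empty, Measure.map_dirac' (by fun_prop)]
      simp [gaussianReal_zero_var]
  | succ n ih =>
      have he := measurePreserving_piFinSuccAbove (fun _ : Fin (n + 1) => gaussianReal m 1) 0
      have hsum : (fun f : Fin (n + 1) → ℝ => ∑ i, f i)
          = (fun p : ℝ × (Fin n → ℝ) => p.1 + ∑ j, p.2 j)
            ∘ (MeasurableEquiv.piFinSuccAbove (fun _ : Fin (n + 1) => ℝ) 0) := by
        ext f
        simp [MeasurableEquiv.piFinSuccAbove, Fin.sum_univ_succAbove f 0, Fin.tail]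
      rw [hsum, ← Measure.map_map (by fun_prop) (MeasurableEquiv.measurable _), he.map_eq]
      have hsplit : (fun p : ℝ × (Fin n → ℝ) => p.1 + ∑ j, p.2 j)
          = (fun q : ℝ × ℝ => q.1 + q.2) ∘ Prod.map id (fun g : Fin n → ℝ => ∑ j, g j) := rfl
      rw [hsplit, ← Measure.map_map (by fun_prop) (by fun_prop),
        ← Measure.map_prod_map _ _ measurable_id (by fun_prop), Measure.map_id, ih, gauss_conv]
      congr 1
      · push_cast; ring
      · ext; push_cast; ring

noncomputable def sφ : ℝ → ℝ := gaussianPDFReal 0 1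

lemma sφ_def (t : ℝ) : sφ t = (√(2 * π))⁻¹ * rexp (-t ^ 2 / 2) := by
  simp [sφ, gaussianPDFReal]

lemma sφ_eq : sφ = fun t => (√(2 * π))⁻¹ * rexp (-t ^ 2 / 2) := funext sφ_def

lemma sφ_cont : Continuous sφ := by rw [sφ_eq]; fun_prop

lemma sφ_even (t : ℝ) : sφ (-t) = sφ t := by simp [sφ_def]

lemma sφ_intInt (a b : ℝ) : IntervalIntegrable sφ volume a b :=
  sφ_cont.intervalIntegrable a b

lemma sφ_mono {s t : ℝ} (h : s ^ 2 ≤ t ^ 2) : sφ t ≤ sφ s := by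
  rw [sφ_def, sφ_def]
  have : (0:ℝ) < (√(2 * π))⁻¹ := by positivity
  apply mul_le_mul_of_nonneg_left _ this.le
  apply Real.exp_le_exp.2
  linarith

lemma sφ_strict_mono {s t : ℝ} (h : s ^ 2 < t ^ 2) : sφ t < sφ s := by
  rw [sφ_def, sφ_def]
  have : (0:ℝ) < (√(2 * π))⁻¹ := by positivity
  apply mul_lt_mul_of_pos_left _ this
  apply Real.exp_lt_exp.2
  linarith

lemma key_shift {z : ℝ} (hz : 0 < z) {d : ℝ} (hd : 0 < d) :
    ∫ t in (d - z)..(d + z), sφ t < ∫ t in (-z)..z, sφ t := by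
  have hA : ∫ t in (0:ℝ)..d, sφ (t + z) < ∫ t in (0:ℝ)..d, sφ (t - z) := by
    apply integral_lt_integral_of_continuousOn_of_le_of_exists_lt hd
      (sφ_cont.comp (by fun_prop)).continuousOn (sφ_cont.comp (by fun_prop)).continuousOn
    · intro t ht
      show sφ (t + z) ≤ sφ (t - z)
      apply sφ_mono
      nlinarith [ht.1, hz]
    · refine ⟨d, ⟨hd.le, le_refl d⟩, ?_⟩
      show sφ (d + z) < sφ (d - z)
      exact sφ_strict_mono (by nlinarith)
  have h1 : ∫ t in (0:ℝ)..d, sφ (t + z) = ∫ t in z..(d + z), sφ t := by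
    rw [integral_comp_add_right]; norm_num
  have h2 : ∫ t in (0:ℝ)..d, sφ (t - z) = ∫ t in (-z)..(d - z), sφ t := by
    rw [integral_comp_sub_right]; norm_num [sub_eq_neg_add, add_comm]
  have e1 : ∫ t in (-z)..z, sφ t
      = (∫ t in (-z)..(d - z), sφ t) + (∫ t in (d-z)..z, sφ t) :=
    (integral_add_adjacent_intervals (sφ_intInt _ _) (sφ_intInt _ _)).symm
  have e2 : ∫ t in (d-z)..(d + z), sφ t
      = (∫ t in (d-z)..z, sφ t) + (∫ t in z..(d + z), sφ t) :=
    (integral_add_adjacent_intervals (sφ_intInt _ _) (sφ_intInt _ _)).symm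
  rw [e1, e2]
  rw [h1] at hA
  rw [h2] at hA
  linarith

lemma key (z : ℝ) (hz : 0 < z) (d : ℝ) (hd : d ≠ 0) :
    ∫ t in (d - z)..(d + z), sφ t < ∫ t in (-z)..z, sφ t := by
  rcases hd.lt_or_gt with h | h
  · have : ∫ t in (d - z)..(d + z), sφ t = ∫ t in (-d - z)..(-d + z), sφ t := by
      have : ∫ t in (d - z)..(d + z), sφ t = ∫ t in (d - z)..(d + z), sφ (-t) := by
        exact integral_congr fun t _ => (sφ_even t).symm
      rw [this, integral_comp_neg]
      rw [show -(d+z) = -d - z by ring, show -(d - z) = -d + z by ring]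
    rw [this]
    exact key_shift hz (by linarith)
  · exact key_shift hz h



lemma sφ_integrable : Integrable sφ := integrable_gaussianPDFReal 0 1
lemma sφ_nonneg (t : ℝ) : 0 ≤ sφ t := gaussianPDFReal_nonneg 0 1 t
lemma sφ_total : ∫ t, sφ t = 1 := integral_gaussianPDFReal_eq_one 0 one_ne_zero

noncomputable def Φs (r : ℝ) : ℝ := ∫ t in Iic r, sφ t

lemma Φs_nonneg (r : ℝ) : 0 ≤ Φs r :=
  setIntegral_nonneg measurableSet_Iic fun t _ => sφ_nonneg t

lemma sym (a : ℝ) : Φs (-a) = ∫ t in Ici a, sφ t := by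
  rw [Φs, show (∫ t in Iic (-a), sφ t) = ∫ t in Iic (-a), sφ (-t) from
    (setIntegral_congr_fun measurableSet_Iic fun t _ => (sφ_even t).symm),
    integral_comp_neg_Iic, neg_neg]
  exact integral_Ici_eq_integral_Ioi.symm

lemma Φs_neg (a : ℝ) : Φs (-a) = 1 - Φs a := by
  have h := integral_Iic_add_Ioi (f := sφ) (μ := volume) (b := a)
    sφ_integrable.integrableOn sφ_integrable.integrableOn
  rw [sφ_total] at h
  rw [sym, integral_Ici_eq_integral_Ioi]
  have h2 : Φs a = ∫ x in Iic a, sφ x := rfl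
  rw [h2]
  linarith

lemma Φs_zero : Φs 0 = 1 / 2 := by
  have := Φs_neg 0
  rw [neg_zero] at this
  linarith

lemma Φs_mono {a b : ℝ} (h : a ≤ b) : Φs a ≤ Φs b :=
  setIntegral_mono_set sφ_integrable.integrableOn
    (Filter.Eventually.of_forall sφ_nonneg) (HasSubset.Subset.eventuallyLE (Iic_subset_Iic.2 h))

lemma G_Iic (r : ℝ) : gaussianReal 0 1 (Iic r) = ENNReal.ofReal (Φs r) :=
  gaussianReal_apply_eq_integral 0 one_ne_zero _

/-- The final real inequality -/
lemma final_real {α z d : ℝ} (hα : α ∈ Set.Ioo (0:ℝ) 1) (hz : Φs z = 1 - α / 2) (hd : d ≠ 0) :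
    ∫ t in Icc (d - z) (d + z), sφ t < 1 - α := by
  have hzpos : 0 < z := by
    by_contra h
    push_neg at h
    have := Φs_mono h
    rw [hz, Φs_zero] at this
    linarith [hα.2]
  have h1 : ∫ t in Icc (d - z) (d + z), sφ t = ∫ t in (d - z)..(d + z), sφ t := by
    rw [integral_Icc_eq_integral_Ioc, integral_of_le (by linarith)]
  have h2 : ∫ t in (-z)..z, sφ t = 1 - α := by
    rw [← integral_Iic_sub_Iic sφ_integrable.integrableOn sφ_integrable.integrableOn]
    have h3 := Φs_neg z
    show Φs z - Φs (-z) = 1 - α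
    rw [h3, hz]; ring
  rw [h1, ← h2]
  exact key z hzpos d hd

end Auxiliary

section Main

open Real Set
open scoped NNReal

/-- under a mean shift, the unscaled CLT interval built from synthetic normal
samples fails to attain `1 - α` coverage of the true mean, for every sample size `k`.
Here `z` is the `(1 - α/2)`-quantile of `N(0,1)`, characterized by its CDF value. -/
theorem stmt13 (μ μsyn : ℝ) (hne : μ ≠ μsyn) (α : ℝ) (hα : α ∈ Set.Ioo (0 : ℝ) 1)
    (z : ℝ) (hz : gaussianReal 0 1 (Set.Iic z) = ENNReal.ofReal (1 - α / 2))
    (k : ℕ) (hk : 1 ≤ k)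
    {Ω : Type*} [MeasurableSpace Ω] (P : Measure Ω) [IsProbabilityMeasure P]
    (x : Fin k → Ω → ℝ)
    (hlaw : Measure.map (fun ω => fun i => x i ω) P
      = Measure.pi fun _ : Fin k => gaussianReal μsyn 1) :
    P {ω | |(∑ i, x i ω) / k - μ| ≤ z / Real.sqrt k} < ENNReal.ofReal (1 - α) := by
  -- quantile fact in real form
  have hzr : Φs z = 1 - α / 2 := by
    rw [G_Iic z] at hz
    exact (ENNReal.ofReal_eq_ofReal_iff (Φs_nonneg z) (by linarith [hα.2])).mp hz
  set K : ℝ := (k : ℝ) with hK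
  have hKpos : (0:ℝ) < K := by
    have h0 : 0 < k := hk
    rw [hK]
    exact_mod_cast h0
  have hsK : 0 < Real.sqrt K := Real.sqrt_pos.2 hKpos
  have hsq : Real.sqrt K * Real.sqrt K = K := Real.mul_self_sqrt hKpos.le
  set d : ℝ := Real.sqrt K * (μ - μsyn) with hd
  have hdne : d ≠ 0 := mul_ne_zero hsK.ne' (sub_ne_zero.2 hne)
  -- measurability of the random vector
  have haem : AEMeasurable (fun ω => fun i => x i ω) P := by
    by_contra h
    rw [Measure.map_of_not_aemeasurable h] at hlaw
    have := congrArg (fun m : Measure (Fin k → ℝ) => m Set.univ) hlaw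
    simp [measure_univ] at this
  -- the event in ℝ
  set B : Set ℝ := {r : ℝ | |r / K - μ| ≤ z / Real.sqrt K} with hB
  have hBmeas : MeasurableSet B := by
    have : B = (fun r : ℝ => |r / K - μ|) ⁻¹' Iic (z / Real.sqrt K) := rfl
    rw [this]
    exact (by fun_prop : Measurable fun r : ℝ => |r / K - μ|) measurableSet_Iic
  have hsum_meas : Measurable fun f : Fin k → ℝ => ∑ i, f i := by fun_prop
  -- rewrite the probability
  have hPs : P {ω | |(∑ i, x i ω) / k - μ| ≤ z / Real.sqrt k}
      = gaussianReal (K * μsyn) k B := by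
    have h1 : {ω | |(∑ i, x i ω) / k - μ| ≤ z / Real.sqrt k}
        = (fun ω => fun i => x i ω) ⁻¹' ((fun f : Fin k → ℝ => ∑ i, f i) ⁻¹' B) := rfl
    rw [h1, ← Measure.map_apply_of_aemeasurable haem (hsum_meas hBmeas), hlaw,
      ← Measure.map_apply hsum_meas hBmeas, pi_sum_gauss μsyn k]
  rw [hPs]
  -- identify B as an interval
  have hBeq : B = Icc (K * μ - Real.sqrt K * z) (K * μ + Real.sqrt K * z) := by
    have hzs : z / Real.sqrt K = (Real.sqrt K * z) / K := by
      rw [div_eq_div_iff hsK.ne' hKpos.ne']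
      linear_combination -z * hsq
    ext r
    have hkey : |r / K - μ| ≤ z / Real.sqrt K ↔ |r - K * μ| ≤ Real.sqrt K * z := by
      rw [show r / K - μ = (r - K * μ) / K by field_simp, abs_div, abs_of_pos hKpos, hzs,
        div_le_div_iff_of_pos_right hKpos]
    simp only [hB, mem_setOf_eq, mem_Icc]
    rw [hkey, abs_le]
    constructor <;> rintro ⟨h1, h2⟩ <;> constructor <;> linarith
  rw [hBeq]
  -- express the shifted gaussian via the standard one
  have hmap : gaussianReal (K * μsyn) (k : ℝ≥0)
      = Measure.map (fun y => Real.sqrt K * y + K * μsyn) (gaussianReal 0 1) := by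
    have h1 : Measure.map (fun y : ℝ => Real.sqrt K * y) (gaussianReal 0 1)
        = gaussianReal 0 (k : ℝ≥0) := by
      have := gaussianReal_map_const_mul (μ := 0) (v := 1) (Real.sqrt K)
      simp only [mul_zero, mul_one] at this
      rw [show (fun y : ℝ => Real.sqrt K * y) = (Real.sqrt K * ·) from rfl, this]
      congr 1
      ext
      push_cast
      rw [Real.sq_sqrt hKpos.le]
    have h2 : (fun y => Real.sqrt K * y + K * μsyn)
        = (· + K * μsyn) ∘ (fun y : ℝ => Real.sqrt K * y) := rfl
    rw [h2, ← Measure.map_map (by fun_prop) (by fun_prop), h1, gaussianReal_map_add_const,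
      zero_add]
  rw [hmap, Measure.map_apply (by fun_prop) measurableSet_Icc]
  have hpre : (fun y => Real.sqrt K * y + K * μsyn) ⁻¹'
        Icc (K * μ - Real.sqrt K * z) (K * μ + Real.sqrt K * z)
      = Icc (d - z) (d + z) := by
    have e1 : (K * μ - Real.sqrt K * z - K * μsyn) / Real.sqrt K = d - z := by
      rw [div_eq_iff hsK.ne', hd]
      linear_combination -(μ - μsyn) * hsq
    have e2 : (K * μ + Real.sqrt K * z - K * μsyn) / Real.sqrt K = d + z := by
      rw [div_eq_iff hsK.ne', hd]
      linear_combination -(μ - μsyn) * hsq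
    ext y
    simp only [mem_preimage, mem_Icc, ← e1, ← e2, div_le_iff₀ hsK, le_div_iff₀ hsK]
    constructor <;> rintro ⟨h1, h2⟩ <;> constructor <;> nlinarith
  rw [hpre, gaussianReal_apply_eq_integral 0 one_ne_zero]
  exact (ENNReal.ofReal_lt_ofReal_iff (by linarith [hα.2])).2 (final_real hα hzr hdne)

end Main
end

section
/- Fix q, p ∈ (0,1) and an integer k ≥ 1, and let x_1,…,x_k be i.i.d. Bernoulli(q) with sample mean x̄_k = (1/k)Σ_{i=1}^k x_i. Then for every δ ∈ (0,1), with probability at least 1 − δ: |KL(x̄_k ‖ p) − KL(q ‖ p)| ≤ (√(q(1−q)·KL(q‖p))/m(p,q))·√(log(4/δ)/k) + (1 + √(2·KL(q‖p))/m(p,q))·(log(4/δ)/k), where m(p,q) = min{p(1−p), q(1−q)}. -/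
open MeasureTheory ProbabilityTheory
open scoped ENNReal

noncomputable def logitF (x : ℝ) : ℝ := Real.log x - Real.log (1 - x)

/-- Smooth version of `KL(x ‖ q)`. -/
noncomputable def klA (q x : ℝ) : ℝ :=
  x * Real.log x - x * Real.log q + (1 - x) * Real.log (1 - x) - (1 - x) * Real.log (1 - q)

lemma klA_eq {q x : ℝ} (hq0 : 0 < q) (hq1 : q < 1) (hx0 : 0 ≤ x) (hx1 : x ≤ 1) :
    klBer x q = klA q x := by
  have h1q : (1 : ℝ) - q ≠ 0 := by linarith
  rcases eq_or_lt_of_le hx0 with h0 | h0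
  · simp [klBer, klA, ← h0, Real.log_div one_ne_zero h1q]
  rcases eq_or_lt_of_le hx1 with h1 | h1
  · simp [klBer, klA, h1, Real.log_div one_ne_zero (ne_of_gt hq0)]
  rw [klBer, klA, Real.log_div (ne_of_gt h0) (ne_of_gt hq0),
    Real.log_div (by linarith : (1:ℝ) - x ≠ 0) h1q]
  ring

lemma klA_self (q : ℝ) : klA q q = 0 := by unfold klA; ring

lemma klA_continuous (q : ℝ) : Continuous (klA q) := by
  have h1 : Continuous fun x : ℝ => x * Real.log x := Real.continuous_mul_log
  exact ((h1.sub (continuous_id'.mul continuous_const)).add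
    (h1.comp (continuous_const.sub continuous_id'))).sub
    ((continuous_const.sub continuous_id').mul continuous_const)

lemma hasDerivAt_klA (q : ℝ) {x : ℝ} (hx0 : 0 < x) (hx1 : x < 1) :
    HasDerivAt (klA q) (logitF x - logitF q) x := by
  have h2 : HasDerivAt (fun y : ℝ => 1 - y) (-1) x := (hasDerivAt_id x).const_sub 1
  have h1 : HasDerivAt (fun y : ℝ => y * Real.log y) (Real.log x + 1) x :=
    Real.hasDerivAt_mul_log (ne_of_gt hx0)
  have h3 : HasDerivAt (fun y : ℝ => (1 - y) * Real.log (1 - y)) (-(Real.log (1 - x) + 1)) x := by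
    have := (Real.hasDerivAt_mul_log (show (1:ℝ) - x ≠ 0 by linarith)).comp x h2
    exact this.congr_deriv (by ring)
  have h4 : HasDerivAt (fun y : ℝ => y * Real.log q) (Real.log q) x := by
    simpa using (hasDerivAt_id x).mul_const (Real.log q)
  have h5 : HasDerivAt (fun y : ℝ => (1 - y) * Real.log (1 - q)) (-Real.log (1 - q)) x := by
    simpa using h2.mul_const (Real.log (1 - q))
  have h := ((h1.sub h4).add h3).sub h5
  have : klA q = fun y : ℝ =>
      y * Real.log y - y * Real.log q + (1 - y) * Real.log (1 - y) - (1 - y) * Real.log (1 - q) :=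
    rfl
  rw [this]
  refine h.congr_deriv ?_
  unfold logitF; ring

lemma hasDerivAt_logitF {x : ℝ} (hx0 : 0 < x) (hx1 : x < 1) :
    HasDerivAt logitF (1 / x + 1 / (1 - x)) x := by
  have h2 : HasDerivAt (fun y : ℝ => 1 - y) (-1) x := (hasDerivAt_id x).const_sub 1
  have hl1 := Real.hasDerivAt_log (ne_of_gt hx0)
  have hl2 : HasDerivAt (fun y : ℝ => Real.log (1 - y)) (-(1 - x)⁻¹) x := by
    have := (Real.hasDerivAt_log (show (1:ℝ) - x ≠ 0 by linarith)).comp x h2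
    exact this.congr_deriv (by ring)
  have h := hl1.sub hl2
  have : logitF = fun y : ℝ => Real.log y - Real.log (1 - y) := rfl
  rw [this]
  refine h.congr_deriv ?_
  ring
lemma sq_min_bound {a b s : ℝ} (ha : 0 ≤ a) (hb : b ≤ 1) (h1 : a ≤ s) (h2 : s ≤ b) :
    min (a * (1 - a)) (b * (1 - b)) ≤ s * (1 - s) := by
  rcases le_or_gt (a + s) 1 with h | h
  · exact le_trans (min_le_left _ _) (by nlinarith)
  · exact le_trans (min_le_right _ _) (by nlinarith)

/-- If `B ≤ s(1-s)` on `[a,b]`, then `logitF b - logitF a ≤ (b-a)/B`. -/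
lemma logitF_diff_le {a b B : ℝ} (ha : 0 < a) (hb : b < 1) (hab : a ≤ b) (hB : 0 < B)
    (hbound : ∀ s, a ≤ s → s ≤ b → B ≤ s * (1 - s)) :
    logitF b - logitF a ≤ (b - a) / B := by
  have key : AntitoneOn (fun s => logitF s - s / B) (Set.Icc a b) := by
    apply antitoneOn_of_hasDerivWithinAt_nonpos (convex_Icc a b)
      (f' := fun s => 1 / s + 1 / (1 - s) - 1 / B)
    · intro s hs
      exact (((hasDerivAt_logitF (lt_of_lt_of_le ha hs.1) (lt_of_le_of_lt hs.2 hb)).sub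
        ((hasDerivAt_id s).div_const B)).continuousAt).continuousWithinAt
    · intro s hs
      rw [interior_Icc] at hs
      exact ((hasDerivAt_logitF (lt_trans ha hs.1) (lt_trans hs.2 hb)).sub
        ((hasDerivAt_id s).div_const B)).hasDerivWithinAt
    · intro s hs
      rw [interior_Icc] at hs
      have hs0 : 0 < s := lt_trans ha hs.1
      have hs1 : 0 < 1 - s := by have := lt_trans hs.2 hb; linarith
      have hBs : B ≤ s * (1 - s) := hbound s hs.1.le hs.2.le
      have h1 : 1 / s + 1 / (1 - s) = 1 / (s * (1 - s)) := by field_simp; ring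
      rw [h1, sub_nonpos]
      exact one_div_le_one_div_of_le hB hBs
  have h := key (Set.left_mem_Icc.2 hab) (Set.right_mem_Icc.2 hab) hab
  rw [sub_div]
  simp only at h
  linarith

/-- If `s(1-s) ≤ B` on `[a,b]`, then `(b-a)/B ≤ logitF b - logitF a`. -/
lemma le_logitF_diff {a b B : ℝ} (ha : 0 < a) (hb : b < 1) (hab : a ≤ b) (hB : 0 < B)
    (hbound : ∀ s, a ≤ s → s ≤ b → s * (1 - s) ≤ B) :
    (b - a) / B ≤ logitF b - logitF a := by
  have key : MonotoneOn (fun s => logitF s - s / B) (Set.Icc a b) := by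
    apply monotoneOn_of_hasDerivWithinAt_nonneg (convex_Icc a b)
      (f' := fun s => 1 / s + 1 / (1 - s) - 1 / B)
    · intro s hs
      exact (((hasDerivAt_logitF (lt_of_lt_of_le ha hs.1) (lt_of_le_of_lt hs.2 hb)).sub
        ((hasDerivAt_id s).div_const B)).continuousAt).continuousWithinAt
    · intro s hs
      rw [interior_Icc] at hs
      exact ((hasDerivAt_logitF (lt_trans ha hs.1) (lt_trans hs.2 hb)).sub
        ((hasDerivAt_id s).div_const B)).hasDerivWithinAt
    · intro s hs
      rw [interior_Icc] at hs
      have hs0 : 0 < s := lt_trans ha hs.1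
      have hs1 : 0 < 1 - s := by have := lt_trans hs.2 hb; linarith
      have hBs : s * (1 - s) ≤ B := hbound s hs.1.le hs.2.le
      have h1 : 1 / s + 1 / (1 - s) = 1 / (s * (1 - s)) := by field_simp; ring
      rw [h1, sub_nonneg]
      exact one_div_le_one_div_of_le (by positivity) hBs
  have h := key (Set.left_mem_Icc.2 hab) (Set.right_mem_Icc.2 hab) hab
  rw [sub_div]
  simp only at h
  linarith

lemma logitF_mono {a b : ℝ} (ha : 0 < a) (hb : b < 1) (hab : a ≤ b) : logitF a ≤ logitF b := by
  have h := le_logitF_diff ha hb hab one_pos (fun s hs1 hs2 => by nlinarith)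
  have : 0 ≤ (b - a) / 1 := div_nonneg (by linarith) zero_le_one
  linarith
lemma c_abs_le {p q : ℝ} (hp : p ∈ Set.Ioo (0:ℝ) 1) (hq : q ∈ Set.Ioo (0:ℝ) 1) :
    |logitF q - logitF p| ≤ |q - p| / min (p * (1 - p)) (q * (1 - q)) := by
  have hm : 0 < min (p * (1 - p)) (q * (1 - q)) := by
    apply lt_min <;> nlinarith [hp.1, hp.2, hq.1, hq.2]
  rcases le_total p q with h | h
  · have h1 := logitF_diff_le hp.1 hq.2 h hm
      (fun s hs1 hs2 => sq_min_bound hp.1.le hq.2.le hs1 hs2)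
    have h2 := logitF_mono hp.1 hq.2 h
    rw [abs_of_nonneg (by linarith), abs_of_nonneg (by linarith)]
    exact h1
  · have h1 := logitF_diff_le hq.1 hp.2 h (by rwa [min_comm] at hm)
      (fun s hs1 hs2 => sq_min_bound hq.1.le hp.2.le hs1 hs2)
    have h2 := logitF_mono hq.1 hp.2 h
    rw [abs_of_nonpos (by linarith), abs_of_nonpos (by linarith), min_comm]
    have hrw : -(q - p) = p - q := by ring
    rw [hrw]
    linarith
  
lemma pinsker {p q : ℝ} (hp : p ∈ Set.Ioo (0:ℝ) 1) (hq : q ∈ Set.Ioo (0:ℝ) 1) :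
    2 * (q - p) ^ 2 ≤ klBer q p := by
  -- as a function of the second argument s : G s = klA s q - 2*(q-s)^2
  have hG : ∀ s : ℝ, 0 < s → s < 1 →
      HasDerivAt (fun s => klA s q - 2 * (q - s) ^ 2)
        (-q / s + (1 - q) / (1 - s) + 4 * (q - s)) s := by
    intro s hs0 hs1
    have h1 : HasDerivAt (fun s : ℝ => q * Real.log q - q * Real.log s
        + (1 - q) * Real.log (1 - q) - (1 - q) * Real.log (1 - s))
        (-q / s + (1 - q) / (1 - s)) s := by
      have hd1 : HasDerivAt (fun s : ℝ => q * Real.log s) (q / s) s := by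
        simpa [div_eq_mul_inv, mul_comm] using (Real.hasDerivAt_log (ne_of_gt hs0)).const_mul q
      have hd2 : HasDerivAt (fun s : ℝ => (1 - q) * Real.log (1 - s))
          (-((1 - q) / (1 - s))) s := by
        have h2 : HasDerivAt (fun y : ℝ => 1 - y) (-1) s := (hasDerivAt_id s).const_sub 1
        have := ((Real.hasDerivAt_log (show (1:ℝ) - s ≠ 0 by linarith)).comp s h2).const_mul (1-q)
        refine this.congr_deriv ?_
        ring
      have := ((hasDerivAt_const s (q * Real.log q)).sub hd1).add
        ((hasDerivAt_const s ((1 - q) * Real.log (1 - q))).sub hd2)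
      exact (this.congr_deriv
        (by ring : 0 - q / s + (0 - -((1 - q) / (1 - s))) = -q / s + (1 - q) / (1 - s))).congr_of_eventuallyEq
        (Filter.Eventually.of_forall fun y => by rw [Pi.add_apply, Pi.sub_apply, Pi.sub_apply]; ring)
    have h2 : HasDerivAt (fun s : ℝ => 2 * (q - s) ^ 2) (-(4 * (q - s))) s := by
      have h0 : HasDerivAt (fun s : ℝ => q - s) (-1) s := (hasDerivAt_id s).const_sub q
      have := (h0.pow 2).const_mul (2:ℝ)
      exact this.congr_deriv (by norm_num; ring)
    have := h1.sub h2
    have heq : (fun s => klA s q - 2 * (q - s) ^ 2) = fun s : ℝ => (q * Real.log q - q * Real.log s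
        + (1 - q) * Real.log (1 - q) - (1 - q) * Real.log (1 - s)) - 2 * (q - s) ^ 2 := by
      funext y; unfold klA; ring
    rw [heq]
    exact this.congr_deriv (by ring)
  have hcont : ∀ a b : ℝ, 0 < a → b < 1 → ContinuousOn (fun s => klA s q - 2 * (q - s) ^ 2)
      (Set.Icc a b) := by
    intro a b ha hb s hs
    exact ((hG s (lt_of_lt_of_le ha hs.1) (lt_of_le_of_lt hs.2 hb)).continuousAt).continuousWithinAt
  have hself : klA q q - 2 * (q - q) ^ 2 = 0 := by rw [klA_self]; ring
  rw [klA_eq hp.1 hp.2 hq.1.le hq.2.le]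
  rcases le_total p q with h | h
  · -- antitone on [p, q]
    have key : AntitoneOn (fun s => klA s q - 2 * (q - s) ^ 2) (Set.Icc p q) := by
      apply antitoneOn_of_hasDerivWithinAt_nonpos (convex_Icc p q)
        (f' := fun s => -q / s + (1 - q) / (1 - s) + 4 * (q - s))
        (hcont p q hp.1 hq.2)
      · intro s hs
        rw [interior_Icc] at hs
        exact (hG s (lt_trans hp.1 hs.1) (lt_trans hs.2 hq.2)).hasDerivWithinAt
      · intro s hs
        rw [interior_Icc] at hs
        have hs0 : 0 < s := lt_trans hp.1 hs.1
        have hs1 : 0 < 1 - s := by have := lt_trans hs.2 hq.2; linarith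
        have heq : -q / s + (1 - q) / (1 - s) + 4 * (q - s)
            = ((s - q) + 4 * (q - s) * (s * (1 - s))) / (s * (1 - s)) := by
          field_simp
          ring
        rw [heq]
        apply div_nonpos_of_nonpos_of_nonneg _ (by positivity)
        nlinarith [sq_nonneg (1 - 2 * s), hs.2, lt_trans hp.1 hs.1]
    have := key (Set.left_mem_Icc.2 h) (Set.right_mem_Icc.2 h) h
    simp only at this
    rw [hself] at this
    linarith
  · -- monotone on [q, p]
    have key : MonotoneOn (fun s => klA s q - 2 * (q - s) ^ 2) (Set.Icc q p) := by
      apply monotoneOn_of_hasDerivWithinAt_nonneg (convex_Icc q p)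
        (f' := fun s => -q / s + (1 - q) / (1 - s) + 4 * (q - s))
        (hcont q p hq.1 hp.2)
      · intro s hs
        rw [interior_Icc] at hs
        exact (hG s (lt_trans hq.1 hs.1) (lt_trans hs.2 hp.2)).hasDerivWithinAt
      · intro s hs
        rw [interior_Icc] at hs
        have hs0 : 0 < s := lt_trans hq.1 hs.1
        have hs1 : 0 < 1 - s := by have := lt_trans hs.2 hp.2; linarith
        have heq : -q / s + (1 - q) / (1 - s) + 4 * (q - s)
            = ((s - q) + 4 * (q - s) * (s * (1 - s))) / (s * (1 - s)) := by
          field_simp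
          ring
        rw [heq]
        apply div_nonneg _ (by positivity)
        nlinarith [sq_nonneg (1 - 2 * s), hs.1]
    have := key (Set.left_mem_Icc.2 h) (Set.right_mem_Icc.2 h) h
    simp only at this
    rw [hself] at this
    linarith
lemma klA_monoOn {q : ℝ} (hq : q ∈ Set.Ioo (0:ℝ) 1) : MonotoneOn (klA q) (Set.Icc q 1) := by
  apply monotoneOn_of_hasDerivWithinAt_nonneg (convex_Icc q 1)
    (f' := fun s => logitF s - logitF q) (klA_continuous q).continuousOn
  · intro s hs
    rw [interior_Icc] at hs
    exact (hasDerivAt_klA q (lt_trans hq.1 hs.1) hs.2).hasDerivWithinAt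
  · intro s hs
    rw [interior_Icc] at hs
    have := logitF_mono hq.1 hs.2 hs.1.le
    linarith

lemma klA_antiOn {q : ℝ} (hq : q ∈ Set.Ioo (0:ℝ) 1) : AntitoneOn (klA q) (Set.Icc 0 q) := by
  apply antitoneOn_of_hasDerivWithinAt_nonpos (convex_Icc 0 q)
    (f' := fun s => logitF s - logitF q) (klA_continuous q).continuousOn
  · intro s hs
    rw [interior_Icc] at hs
    exact (hasDerivAt_klA q hs.1 (lt_trans hs.2 hq.2)).hasDerivWithinAt
  · intro s hs
    rw [interior_Icc] at hs
    have := logitF_mono hs.1 hq.2 hs.2.le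
    linarith

lemma klA_lower {q x : ℝ} (hq : q ∈ Set.Ioo (0:ℝ) 1) (hx0 : 0 ≤ x) (hx1 : x ≤ 1) :
    (x - q) ^ 2 ≤ 2 * klA q x * (q * (1 - q) + |x - q|) := by
  rcases le_or_gt q x with hqx | hqx
  · rcases eq_or_lt_of_le hqx with heq | hlt
    · rw [← heq]; simp [klA_self]
    set B := q * (1 - q) + (x - q) with hBdef
    have hB : 0 < B := by have := hq.1; have := hq.2; nlinarith
    have key : MonotoneOn (fun s => klA q s - (s - q) ^ 2 / (2 * B)) (Set.Icc q x) := by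
      apply monotoneOn_of_hasDerivWithinAt_nonneg (convex_Icc q x)
        (f' := fun s => (logitF s - logitF q) - (s - q) / B)
      · exact ((klA_continuous q).sub (by fun_prop)).continuousOn
      · intro s hs
        rw [interior_Icc] at hs
        have hd : HasDerivAt (fun s : ℝ => (s - q) ^ 2 / (2 * B)) ((s - q) / B) s := by
          have := (((hasDerivAt_id s).sub_const q).pow 2).div_const (2 * B)
          refine this.congr_deriv ?_
          rw [id_eq]
          field_simp
          ring
        exact ((hasDerivAt_klA q (lt_trans hq.1 hs.1) (lt_of_lt_of_le hs.2 hx1)).sub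
          hd).hasDerivWithinAt
      · intro s hs
        rw [interior_Icc] at hs
        have h := le_logitF_diff hq.1 (lt_of_lt_of_le hs.2 hx1) hs.1.le hB
          (fun u hu1 hu2 => by nlinarith [hs.2.le, hq.1.le])
        linarith
    have h := key (Set.left_mem_Icc.2 hqx) (Set.right_mem_Icc.2 hqx) hqx
    have hz : klA q q - (q - q) ^ 2 / (2 * B) = 0 := by rw [klA_self]; ring
    rw [abs_of_nonneg (by linarith)]
    have h2 : (x - q) ^ 2 / (2 * B) ≤ klA q x := by linarith
    rw [div_le_iff₀ (by positivity)] at h2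
    nlinarith [h2]
  · set B := q * (1 - q) + (q - x) with hBdef
    have hB : 0 < B := by have := hq.1; have := hq.2; nlinarith
    have key : AntitoneOn (fun s => klA q s - (q - s) ^ 2 / (2 * B)) (Set.Icc x q) := by
      apply antitoneOn_of_hasDerivWithinAt_nonpos (convex_Icc x q)
        (f' := fun s => (logitF s - logitF q) + (q - s) / B)
      · exact ((klA_continuous q).sub (by fun_prop)).continuousOn
      · intro s hs
        rw [interior_Icc] at hs
        have hd : HasDerivAt (fun s : ℝ => (q - s) ^ 2 / (2 * B)) (-((q - s) / B)) s := by
          have := (((hasDerivAt_id s).const_sub q).pow 2).div_const (2 * B)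
          refine this.congr_deriv ?_
          rw [id_eq]
          field_simp
          ring
        have := (hasDerivAt_klA q (lt_of_le_of_lt hx0 hs.1) (lt_trans hs.2 hq.2)).sub hd
        refine (this.congr_deriv ?_).hasDerivWithinAt
        ring
      · intro s hs
        rw [interior_Icc] at hs
        have h := le_logitF_diff (lt_of_le_of_lt hx0 hs.1) hq.2 hs.2.le hB
          (fun u hu1 hu2 => by nlinarith [hs.1.le, hq.2.le])
        linarith
    have h := key (Set.left_mem_Icc.2 hqx.le) (Set.right_mem_Icc.2 hqx.le) hqx.le
    have hz : klA q q - (q - q) ^ 2 / (2 * B) = 0 := by rw [klA_self]; ring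
    rw [abs_of_nonpos (by linarith)]
    have h2 : (q - x) ^ 2 / (2 * B) ≤ klA q x := by linarith
    rw [div_le_iff₀ (by positivity)] at h2
    nlinarith [h2]

lemma klA_nonneg {q x : ℝ} (hq : q ∈ Set.Ioo (0:ℝ) 1) (hx0 : 0 ≤ x) (hx1 : x ≤ 1) :
    0 ≤ klA q x := by
  have h := klA_lower hq hx0 hx1
  have hB : 0 < q * (1 - q) + |x - q| := by
    have := hq.1; have := hq.2
    have := abs_nonneg (x - q)
    nlinarith
  nlinarith [sq_nonneg (x - q)]
lemma det_bound {q p x r : ℝ} (hq : q ∈ Set.Ioo (0:ℝ) 1) (hp : p ∈ Set.Ioo (0:ℝ) 1)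
    (hx0 : 0 ≤ x) (hx1 : x ≤ 1) (hr : 0 ≤ r) (hkl : klBer x q ≤ r) :
    |klBer x p - klBer q p| ≤
      Real.sqrt (q * (1 - q) * klBer q p) / min (p * (1 - p)) (q * (1 - q)) * Real.sqrt r +
      (1 + Real.sqrt (2 * klBer q p) / min (p * (1 - p)) (q * (1 - q))) * r := by
  set m := min (p * (1 - p)) (q * (1 - q)) with hmdef
  set KL := klBer q p with hKLdef
  have hm : 0 < m := by
    apply lt_min <;> nlinarith [hp.1, hp.2, hq.1, hq.2]
  have hv : 0 < q * (1 - q) := by nlinarith [hq.1, hq.2]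
  have hpin : 2 * (q - p) ^ 2 ≤ KL := pinsker hp hq
  have hKL : 0 ≤ KL := by nlinarith [sq_nonneg (q - p)]
  -- identity
  have hid : klBer x p - klBer q p = klBer x q + (x - q) * (logitF q - logitF p) := by
    rw [klA_eq hp.1 hp.2 hx0 hx1, klA_eq hp.1 hp.2 hq.1.le hq.2.le,
      klA_eq hq.1 hq.2 hx0 hx1]
    unfold klA logitF
    ring
  have hklx0 : 0 ≤ klBer x q := by
    rw [klA_eq hq.1 hq.2 hx0 hx1]; exact klA_nonneg hq hx0 hx1
  have hc : |logitF q - logitF p| ≤ |q - p| / m := c_abs_le hp hq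
  have hqp : |q - p| ≤ Real.sqrt (KL / 2) := by
    rw [← Real.sqrt_sq_eq_abs]
    exact Real.sqrt_le_sqrt (by linarith)
  have hd2 : (x - q) ^ 2 ≤ 2 * r * (q * (1 - q) + |x - q|) := by
    have h := klA_lower hq hx0 hx1
    rw [← klA_eq hq.1 hq.2 hx0 hx1] at h
    have hB : 0 ≤ q * (1 - q) + |x - q| := by positivity
    nlinarith [h]
  set s := Real.sqrt (2 * (q * (1 - q)) * r) with hsdef
  have hs0 : 0 ≤ s := Real.sqrt_nonneg _
  have hs2 : s ^ 2 = 2 * (q * (1 - q)) * r := Real.sq_sqrt (by positivity)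
  have hd : |x - q| ≤ s + 2 * r := by
    set d := |x - q| with hddef
    have hd0 : 0 ≤ d := abs_nonneg _
    have hdd : d ^ 2 ≤ 2 * r * (q * (1 - q)) + 2 * r * d := by
      have := sq_abs (x - q)
      nlinarith [hd2]
    by_contra hcon
    push_neg at hcon
    nlinarith [hcon, hs0, hd0, hr, hs2, sq_nonneg (d - s)]
  -- combine
  have habs : |klBer x p - klBer q p| ≤ r + (s + 2 * r) * (Real.sqrt (KL / 2) / m) := by
    rw [hid]
    refine (abs_add_le _ _).trans ?_
    rw [abs_mul]
    have h1 : |klBer x q| ≤ r := by rw [abs_of_nonneg hklx0]; exact hkl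
    have h2 : |x - q| * |logitF q - logitF p| ≤ (s + 2 * r) * (Real.sqrt (KL / 2) / m) := by
      apply mul_le_mul hd _ (abs_nonneg _) (by linarith)
      refine hc.trans ?_
      exact (div_le_div_iff_of_pos_right hm).mpr hqp
    linarith
  refine habs.trans (le_of_eq ?_)
  have e1 : s * Real.sqrt (KL / 2) = Real.sqrt (q * (1 - q) * KL) * Real.sqrt r := by
    rw [hsdef, ← Real.sqrt_mul (by positivity), ← Real.sqrt_mul (by positivity)]
    congr 1
    ring
  have e2 : Real.sqrt (2 * KL) = 2 * Real.sqrt (KL / 2) := by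
    rw [show (2:ℝ) * KL = 2 ^ 2 * (KL / 2) by ring, Real.sqrt_mul (by positivity),
      Real.sqrt_sq (by norm_num)]
  calc r + (s + 2 * r) * (Real.sqrt (KL / 2) / m)
      = s * Real.sqrt (KL / 2) / m + r + 2 * Real.sqrt (KL / 2) * r / m := by ring
    _ = Real.sqrt (q * (1 - q) * KL) * Real.sqrt r / m + r + Real.sqrt (2 * KL) * r / m := by
        rw [e1, e2]
    _ = Real.sqrt (q * (1 - q) * KL) / m * Real.sqrt r + (1 + Real.sqrt (2 * KL) / m) * r := by
        ring
lemma bern_isProb {q : ℝ} (h0 : 0 ≤ q) (h1 : q ≤ 1) : IsProbabilityMeasure (bern q) := by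
  constructor
  rw [bern, Measure.add_apply, Measure.smul_apply, Measure.smul_apply]
  simp only [measure_univ, smul_eq_mul, mul_one]
  rw [← ENNReal.ofReal_add h0 (by linarith)]
  norm_num

lemma integrable_exp_dirac (t a : ℝ) : Integrable (fun y => Real.exp (t * y)) (Measure.dirac a) := by
  have hC : Continuous fun y : ℝ => Real.exp (t * y) := by fun_prop
  refine ⟨hC.aestronglyMeasurable, ?_⟩
  rw [hasFiniteIntegral_iff_norm, MeasureTheory.lintegral_dirac' _ (by fun_prop)]
  exact ENNReal.ofReal_lt_top

lemma integrable_exp_smul_dirac (t a : ℝ) (c : ℝ≥0∞) (hc : c ≠ ∞) :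
    Integrable (fun y => Real.exp (t * y)) (c • Measure.dirac a) := by
  rcases eq_or_ne c 0 with h | h
  · rw [h, zero_smul]
    exact integrable_zero_measure
  · exact (integrable_smul_measure h hc).2 (integrable_exp_dirac t a)

lemma integrable_exp_bern (q t : ℝ) : Integrable (fun y => Real.exp (t * y)) (bern q) := by
  rw [bern]
  exact (integrable_exp_smul_dirac t 1 _ ENNReal.ofReal_ne_top).add_measure
    (integrable_exp_smul_dirac t 0 _ ENNReal.ofReal_ne_top)

lemma integral_exp_bern {q : ℝ} (h0 : 0 ≤ q) (h1 : q ≤ 1) (t : ℝ) :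
    ∫ y, Real.exp (t * y) ∂(bern q) = q * Real.exp t + (1 - q) := by
  rw [bern, integral_add_measure (integrable_exp_smul_dirac t 1 _ ENNReal.ofReal_ne_top)
    (integrable_exp_smul_dirac t 0 _ ENNReal.ofReal_ne_top),
    integral_smul_measure, integral_smul_measure, integral_dirac, integral_dirac]
  simp only [smul_eq_mul, mul_one, mul_zero, Real.exp_zero]
  rw [ENNReal.toReal_ofReal h0, ENNReal.toReal_ofReal (by linarith)]

lemma integral_pi_prod_pow {E : Type*} [MeasurableSpace E] (μ : Measure E) [SigmaFinite μ]
    (k : ℕ) (f : E → ℝ) :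
    ∫ x : Fin k → E, ∏ i, f (x i) ∂(Measure.pi fun _ => μ) = (∫ y, f y ∂μ) ^ k := by
  letI : MeasureSpace E := ⟨μ⟩
  haveI : SigmaFinite (volume : Measure E) := ‹_›
  have h : (Measure.pi fun _ : Fin k => μ) = (volume : Measure (Fin k → E)) :=
    (MeasureTheory.volume_pi).symm
  rw [h]
  rw [← h]
  simpa using MeasureTheory.integral_fintype_prod_eq_pow (ι := Fin k) f (μ := μ)

lemma integrable_pi_prod {E : Type*} [MeasurableSpace E] (μ : Measure E) [SigmaFinite μ]
    (k : ℕ) (f : E → ℝ) (hf : Integrable f μ) :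
    Integrable (fun x : Fin k → E => ∏ i, f (x i)) (Measure.pi fun _ => μ) := by
  letI : MeasureSpace E := ⟨μ⟩
  haveI : SigmaFinite (volume : Measure E) := ‹_›
  have h : (Measure.pi fun _ : Fin k => μ) = (volume : Measure (Fin k → E)) :=
    (MeasureTheory.volume_pi).symm
  rw [h]
  exact MeasureTheory.Integrable.fintype_prod (f := fun _ : Fin k => f) (fun _ => hf)
lemma chernoff_core {q a : ℝ} (hq : q ∈ Set.Ioo (0:ℝ) 1) (ha : a ∈ Set.Ioo (0:ℝ) 1) (k : ℕ)
    (t : ℝ) (ht : t = Real.log (a * (1 - q) / (q * (1 - a)))) :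
    (Measure.pi fun _ : Fin k => bern q)
        {f | Real.exp (t * ((k:ℝ) * a)) ≤ ∏ i, Real.exp (t * f i)}
      ≤ ENNReal.ofReal (Real.exp (-((k:ℝ) * klA q a))) := by
  have h1q : 0 < 1 - q := by linarith [hq.2]
  have h1a : 0 < 1 - a := by linarith [ha.2]
  haveI : IsProbabilityMeasure (bern q) := bern_isProb hq.1.le hq.2.le
  set μ := Measure.pi fun _ : Fin k => bern q with hμ
  haveI : IsProbabilityMeasure μ := by rw [hμ]; infer_instance
  have hratio : 0 < a * (1 - q) / (q * (1 - a)) := by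
    apply div_pos (mul_pos ha.1 h1q) (mul_pos hq.1 h1a)
  have hexp_t : Real.exp t = a * (1 - q) / (q * (1 - a)) := by rw [ht]; exact Real.exp_log hratio
  set g : (Fin k → ℝ) → ℝ := fun f => ∏ i, Real.exp (t * f i) with hg
  have hgint : Integrable g μ := integrable_pi_prod _ k _ (integrable_exp_bern q t)
  have hgnn : 0 ≤ᵐ[μ] g := ae_of_all _ fun f => Finset.prod_nonneg fun i _ => (Real.exp_pos _).le
  have hmark := mul_meas_ge_le_integral_of_nonneg hgnn hgint (Real.exp (t * ((k:ℝ) * a)))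
  have hint : ∫ x, g x ∂μ = (q * Real.exp t + (1 - q)) ^ k := by
    rw [hg, hμ]
    rw [show (fun f : Fin k → ℝ => ∏ i, Real.exp (t * f i))
        = fun f : Fin k → ℝ => ∏ i, (fun y => Real.exp (t * y)) (f i) from rfl]
    rw [integral_pi_prod_pow (bern q) k (fun y => Real.exp (t * y)),
      integral_exp_bern hq.1.le hq.2.le]
  set S := {f : Fin k → ℝ | Real.exp (t * ((k:ℝ) * a)) ≤ g f} with hS
  have hev : μ S ≤ ENNReal.ofReal ((q * Real.exp t + (1 - q)) ^ k / Real.exp (t * ((k:ℝ) * a))) := by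
    have hne : μ S ≠ ⊤ := measure_ne_top _ _
    have h1 : (μ S).toReal ≤ (q * Real.exp t + (1 - q)) ^ k / Real.exp (t * ((k:ℝ) * a)) := by
      rw [le_div_iff₀ (Real.exp_pos _)]
      rw [hint] at hmark
      change Real.exp (t * ((k:ℝ) * a)) * (μ S).toReal ≤ _ at hmark
      linarith [hmark]
    calc μ S = ENNReal.ofReal ((μ S).toReal) := (ENNReal.ofReal_toReal hne).symm
      _ ≤ _ := ENNReal.ofReal_le_ofReal h1
  refine hev.trans (le_of_eq ?_)
  congr 1
  have hsum : q * Real.exp t + (1 - q) = (1 - q) / (1 - a) := by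
    have hq0 : q ≠ 0 := hq.1.ne'
    have h1a0 : (1:ℝ) - a ≠ 0 := h1a.ne'
    rw [hexp_t, eq_div_iff h1a0]
    field_simp
    ring
  rw [hsum]
  have hpow : ((1 - q) / (1 - a)) ^ k = Real.exp ((k:ℝ) * Real.log ((1 - q) / (1 - a))) := by
    rw [Real.exp_nat_mul, Real.exp_log (by positivity)]
  rw [hpow, ← Real.exp_sub]
  congr 1
  have hlog1 : Real.log ((1 - q) / (1 - a)) = Real.log (1 - q) - Real.log (1 - a) :=
    Real.log_div h1q.ne' h1a.ne'
  have hlogt : t = Real.log a + Real.log (1 - q) - Real.log q - Real.log (1 - a) := by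
    rw [ht, Real.log_div (mul_pos ha.1 h1q).ne' (mul_pos hq.1 h1a).ne',
      Real.log_mul ha.1.ne' h1q.ne', Real.log_mul hq.1.ne' h1a.ne']
    ring
  rw [hlog1, hlogt]
  unfold klA
  ring

lemma chernoff_up {q a : ℝ} (hq : q ∈ Set.Ioo (0:ℝ) 1) (haq : q < a) (ha1 : a < 1) (k : ℕ) :
    (Measure.pi fun _ : Fin k => bern q) {f | (k:ℝ) * a ≤ ∑ i, f i}
      ≤ ENNReal.ofReal (Real.exp (-((k:ℝ) * klA q a))) := by
  have ha : a ∈ Set.Ioo (0:ℝ) 1 := ⟨lt_trans hq.1 haq, ha1⟩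
  set t := Real.log (a * (1 - q) / (q * (1 - a))) with ht
  have h1q : 0 < 1 - q := by linarith [hq.2]
  have h1a : 0 < 1 - a := by linarith
  have ht0 : 0 < t := by
    rw [ht]
    apply Real.log_pos
    rw [one_lt_div (mul_pos hq.1 h1a)]
    nlinarith
  have hset : {f : Fin k → ℝ | (k:ℝ) * a ≤ ∑ i, f i}
      = {f : Fin k → ℝ | Real.exp (t * ((k:ℝ) * a)) ≤ ∏ i, Real.exp (t * f i)} := by
    ext f
    simp only [Set.mem_setOf_eq]
    rw [← Real.exp_sum, Real.exp_le_exp, ← Finset.mul_sum]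
    exact (mul_le_mul_iff_of_pos_left ht0).symm
  rw [hset]
  exact chernoff_core hq ha k t ht

lemma chernoff_down {q a : ℝ} (hq : q ∈ Set.Ioo (0:ℝ) 1) (ha0 : 0 < a) (haq : a < q) (k : ℕ) :
    (Measure.pi fun _ : Fin k => bern q) {f | ∑ i, f i ≤ (k:ℝ) * a}
      ≤ ENNReal.ofReal (Real.exp (-((k:ℝ) * klA q a))) := by
  have ha : a ∈ Set.Ioo (0:ℝ) 1 := ⟨ha0, lt_trans haq hq.2⟩
  set t := Real.log (a * (1 - q) / (q * (1 - a))) with ht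
  have h1q : 0 < 1 - q := by linarith [hq.2]
  have h1a : 0 < 1 - a := by linarith [ha.2]
  have ht0 : t < 0 := by
    rw [ht]
    apply Real.log_neg
    · apply div_pos (mul_pos ha.1 h1q) (mul_pos hq.1 h1a)
    · rw [div_lt_one (mul_pos hq.1 h1a)]
      nlinarith
  have hset : {f : Fin k → ℝ | ∑ i, f i ≤ (k:ℝ) * a}
      = {f : Fin k → ℝ | Real.exp (t * ((k:ℝ) * a)) ≤ ∏ i, Real.exp (t * f i)} := by
    ext f
    simp only [Set.mem_setOf_eq]
    rw [← Real.exp_sum, Real.exp_le_exp, ← Finset.mul_sum]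
    exact (mul_le_mul_left_of_neg ht0).symm
  rw [hset]
  exact chernoff_core hq ha k t ht
/-- KL-based perturbed Bernoulli concentration bound. -/
theorem stmt15 (q p : ℝ) (hq : q ∈ Set.Ioo (0 : ℝ) 1) (hp : p ∈ Set.Ioo (0 : ℝ) 1)
    (k : ℕ) (hk : 1 ≤ k)
    {Ω : Type*} [MeasurableSpace Ω] (P : Measure Ω) [IsProbabilityMeasure P]
    (x : Fin k → Ω → ℝ)
    (hlaw : Measure.map (fun ω => fun i => x i ω) P = Measure.pi fun _ : Fin k => bern q)
    (δ : ℝ) (hδ : δ ∈ Set.Ioo (0 : ℝ) 1) :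
    ENNReal.ofReal (1 - δ) ≤
      P {ω | |klBer ((∑ i, x i ω) / k) p - klBer q p| ≤
        Real.sqrt (q * (1 - q) * klBer q p) / min (p * (1 - p)) (q * (1 - q)) *
          Real.sqrt (Real.log (4 / δ) / k) +
        (1 + Real.sqrt (2 * klBer q p) / min (p * (1 - p)) (q * (1 - q))) *
          (Real.log (4 / δ) / k)} := by
  set L := Real.log (4 / δ) with hLdef
  have hδ0 := hδ.1
  have hδ1 := hδ.2
  have hL0 : 0 < L := Real.log_pos ((one_lt_div hδ0).2 (by linarith))
  have hk0 : (0:ℝ) < (k:ℝ) := by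
    have : 0 < k := hk
    exact_mod_cast this
  set r := L / (k:ℝ) with hrdef
  have hr0 : 0 < r := div_pos hL0 hk0
  haveI : IsProbabilityMeasure (bern q) := bern_isProb hq.1.le hq.2.le
  set μ := Measure.pi fun _ : Fin k => bern q with hμdef
  haveI : IsProbabilityMeasure μ := by rw [hμdef]; infer_instance
  set T : Ω → (Fin k → ℝ) := fun ω i => x i ω with hTdef
  have hTae : AEMeasurable T P := by
    by_contra h
    rw [Measure.map_of_not_aemeasurable h] at hlaw
    exact IsProbabilityMeasure.ne_zero μ hlaw.symm
  set A : Set (Fin k → ℝ) := {f | ∀ i, f i = 0 ∨ f i = 1} with hAdef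
  have hAeq : A = Set.pi Set.univ (fun _ : Fin k => ({0, 1} : Set ℝ)) := by
    ext f
    simp [hAdef, Set.mem_pi]
  have hAm : MeasurableSet A := by
    rw [hAeq]
    exact MeasurableSet.univ_pi fun i =>
      (measurableSet_singleton (1:ℝ)).insert 0
  have hμA : μ A = 1 := by
    rw [hAeq, hμdef, Measure.pi_pi]
    have h01 : bern q ({0, 1} : Set ℝ) = 1 := by
      rw [bern, Measure.add_apply, Measure.smul_apply, Measure.smul_apply,
        Measure.dirac_apply_of_mem (by simp), Measure.dirac_apply_of_mem (by simp)]
      simp only [smul_eq_mul, mul_one]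
      rw [← ENNReal.ofReal_add hq.1.le (by linarith [hq.2])]
      norm_num
    simp [h01]
  have hmeanM : Measurable fun f : Fin k → ℝ => (∑ i, f i) / (k:ℝ) :=
    (Finset.univ.measurable_sum fun i _ => measurable_pi_apply i).div_const _
  have hklM : Measurable fun f : Fin k → ℝ => klBer ((∑ i, f i) / (k:ℝ)) q := by
    have hrfl : (fun f : Fin k → ℝ => klBer ((∑ i, f i) / (k:ℝ)) q)
        = fun f : Fin k → ℝ =>
          ((∑ i, f i) / (k:ℝ)) * Real.log (((∑ i, f i) / (k:ℝ)) / q)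
          + (1 - (∑ i, f i) / (k:ℝ)) * Real.log ((1 - (∑ i, f i) / (k:ℝ)) / (1 - q)) := rfl
    rw [hrfl]
    exact (hmeanM.mul (Real.measurable_log.comp (hmeanM.div_const q))).add
      ((measurable_const.sub hmeanM).mul
        (Real.measurable_log.comp ((measurable_const.sub hmeanM).div_const (1 - q))))
  set G : Set (Fin k → ℝ) := A ∩ {f | klBer ((∑ i, f i) / (k:ℝ)) q ≤ r} with hGdef
  have hGm : MeasurableSet G := hAm.inter (measurableSet_le hklM measurable_const)
  -- pullback inclusion
  have hsub : T ⁻¹' G ⊆ {ω | |klBer ((∑ i, x i ω) / k) p - klBer q p| ≤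
      Real.sqrt (q * (1 - q) * klBer q p) / min (p * (1 - p)) (q * (1 - q)) * Real.sqrt r +
      (1 + Real.sqrt (2 * klBer q p) / min (p * (1 - p)) (q * (1 - q))) * r} := by
    intro ω hω
    obtain ⟨hA_, hkl_⟩ := hω
    have h01 : ∀ i, 0 ≤ x i ω ∧ x i ω ≤ 1 := by
      intro i
      rcases hA_ i with h | h <;> rw [show T ω i = x i ω from rfl] at h <;> rw [h] <;> norm_num
    have hsum0 : 0 ≤ ∑ i, x i ω := Finset.sum_nonneg fun i _ => (h01 i).1
    have hsumk : ∑ i, x i ω ≤ (k:ℝ) := by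
      calc ∑ i, x i ω ≤ ∑ _i : Fin k, (1:ℝ) := Finset.sum_le_sum fun i _ => (h01 i).2
        _ = (k:ℝ) := by simp
    have hm0 : 0 ≤ (∑ i, x i ω) / (k:ℝ) := by positivity
    have hm1 : (∑ i, x i ω) / (k:ℝ) ≤ 1 := by rw [div_le_one hk0]; exact hsumk
    exact det_bound hq hp hm0 hm1 hr0.le hkl_
  have hmap : P (T ⁻¹' G) = μ G := by
    rw [← Measure.map_apply_of_aemeasurable hTae hGm, hTdef, hlaw, hμdef]
  -- upper tail
  have hup : μ (A ∩ {f | q ≤ (∑ i, f i) / (k:ℝ)} ∩ {f | r < klBer ((∑ i, f i) / (k:ℝ)) q})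
      ≤ ENNReal.ofReal (δ / 4) := by
    rcases le_or_gt (klA q 1) r with hcase | hcase
    · refine le_trans (measure_mono (show _ ⊆ (∅ : Set (Fin k → ℝ)) from ?_)) (by simp)
      rintro f ⟨⟨hfA, hfq⟩, hfr⟩
      exfalso
      have hy1 : (∑ i, f i) / (k:ℝ) ≤ 1 := by
        rw [div_le_one hk0]
        calc ∑ i, f i ≤ ∑ _i : Fin k, (1:ℝ) := by
              refine Finset.sum_le_sum fun i _ => ?_
              rcases hfA i with h | h <;> rw [h] <;> norm_num
          _ = (k:ℝ) := by simp
      have hmono := klA_monoOn hq (Set.mem_Icc.2 ⟨hfq, hy1⟩)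
        (Set.mem_Icc.2 ⟨hq.2.le, le_refl 1⟩) hy1
      have : klBer ((∑ i, f i) / (k:ℝ)) q ≤ r := by
        rw [klA_eq hq.1 hq.2 (le_trans hq.1.le hfq) hy1]
        exact le_trans hmono hcase
      exact absurd hfr (not_lt.2 this)
    · obtain ⟨a, haI, haEq⟩ := intermediate_value_Ioo (le_of_lt hq.2)
        (klA_continuous q).continuousOn
        (show r ∈ Set.Ioo (klA q q) (klA q 1) by rw [klA_self]; exact ⟨hr0, hcase⟩)
      have hsubset : A ∩ {f | q ≤ (∑ i, f i) / (k:ℝ)} ∩ {f | r < klBer ((∑ i, f i) / (k:ℝ)) q}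
          ⊆ {f : Fin k → ℝ | (k:ℝ) * a ≤ ∑ i, f i} := by
        rintro f ⟨⟨hfA, hfq⟩, hfr⟩
        have hy1 : (∑ i, f i) / (k:ℝ) ≤ 1 := by
          rw [div_le_one hk0]
          calc ∑ i, f i ≤ ∑ _i : Fin k, (1:ℝ) := by
                refine Finset.sum_le_sum fun i _ => ?_
                rcases hfA i with h | h <;> rw [h] <;> norm_num
            _ = (k:ℝ) := by simp
        by_contra hcon
        simp only [Set.mem_setOf_eq, not_le] at hcon
        have hya : (∑ i, f i) / (k:ℝ) < a := by
          rw [div_lt_iff₀ hk0]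
          linarith [hcon]
        have hmono := klA_monoOn hq (Set.mem_Icc.2 ⟨hfq, hy1⟩)
          (Set.mem_Icc.2 ⟨haI.1.le, haI.2.le⟩) hya.le
        rw [haEq] at hmono
        simp only [Set.mem_setOf_eq] at hfr
        rw [klA_eq hq.1 hq.2 (le_trans hq.1.le hfq) hy1] at hfr
        linarith
      refine le_trans (measure_mono hsubset) ?_
      rw [hμdef]
      refine le_trans (chernoff_up hq haI.1 haI.2 k) ?_
      apply ENNReal.ofReal_le_ofReal
      rw [haEq]
      have hkr : (k:ℝ) * r = L := by
        rw [hrdef]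
        field_simp
      rw [hkr]
      have : Real.exp (-L) = δ / 4 := by
        rw [hLdef, ← Real.log_inv, Real.exp_log (by positivity), inv_div]
      rw [this]
  -- lower tail
  have hdown : μ (A ∩ {f | (∑ i, f i) / (k:ℝ) ≤ q} ∩ {f | r < klBer ((∑ i, f i) / (k:ℝ)) q})
      ≤ ENNReal.ofReal (δ / 4) := by
    rcases le_or_gt (klA q 0) r with hcase | hcase
    · refine le_trans (measure_mono (show _ ⊆ (∅ : Set (Fin k → ℝ)) from ?_)) (by simp)
      rintro f ⟨⟨hfA, hfq⟩, hfr⟩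
      exfalso
      have hy0 : 0 ≤ (∑ i, f i) / (k:ℝ) := by
        apply div_nonneg _ hk0.le
        refine Finset.sum_nonneg fun i _ => ?_
        rcases hfA i with h | h <;> rw [h] <;> norm_num
      have hanti := klA_antiOn hq (Set.mem_Icc.2 ⟨le_refl 0, hq.1.le⟩)
        (Set.mem_Icc.2 ⟨hy0, hfq⟩) hy0
      have : klBer ((∑ i, f i) / (k:ℝ)) q ≤ r := by
        rw [klA_eq hq.1 hq.2 hy0 (le_trans hfq hq.2.le)]
        exact le_trans hanti hcase
      exact absurd hfr (not_lt.2 this)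
    · obtain ⟨a, haI, haEq⟩ := intermediate_value_Ioo' (le_of_lt hq.1)
        (klA_continuous q).continuousOn
        (show r ∈ Set.Ioo (klA q q) (klA q 0) by rw [klA_self]; exact ⟨hr0, hcase⟩)
      have hsubset : A ∩ {f | (∑ i, f i) / (k:ℝ) ≤ q} ∩ {f | r < klBer ((∑ i, f i) / (k:ℝ)) q}
          ⊆ {f : Fin k → ℝ | ∑ i, f i ≤ (k:ℝ) * a} := by
        rintro f ⟨⟨hfA, hfq⟩, hfr⟩
        have hy0 : 0 ≤ (∑ i, f i) / (k:ℝ) := by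
          apply div_nonneg _ hk0.le
          refine Finset.sum_nonneg fun i _ => ?_
          rcases hfA i with h | h <;> rw [h] <;> norm_num
        by_contra hcon
        simp only [Set.mem_setOf_eq, not_le] at hcon
        have hya : a < (∑ i, f i) / (k:ℝ) := by
          rw [lt_div_iff₀ hk0]
          linarith [hcon]
        have hanti := klA_antiOn hq (Set.mem_Icc.2 ⟨haI.1.le, haI.2.le⟩)
          (Set.mem_Icc.2 ⟨hy0, hfq⟩) hya.le
        rw [haEq] at hanti
        simp only [Set.mem_setOf_eq] at hfr
        rw [klA_eq hq.1 hq.2 hy0 (le_trans hfq hq.2.le)] at hfr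
        linarith
      refine le_trans (measure_mono hsubset) ?_
      rw [hμdef]
      refine le_trans (chernoff_down hq haI.1 haI.2 k) ?_
      apply ENNReal.ofReal_le_ofReal
      rw [haEq]
      have hkr : (k:ℝ) * r = L := by
        rw [hrdef]
        field_simp
      rw [hkr]
      have : Real.exp (-L) = δ / 4 := by
        rw [hLdef, ← Real.log_inv, Real.exp_log (by positivity), inv_div]
      rw [this]
  -- combine
  have hcompl : μ Gᶜ ≤ ENNReal.ofReal δ := by
    have hsubc : Gᶜ ⊆ Aᶜ ∪
        ((A ∩ {f | q ≤ (∑ i, f i) / (k:ℝ)} ∩ {f | r < klBer ((∑ i, f i) / (k:ℝ)) q}) ∪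
         (A ∩ {f | (∑ i, f i) / (k:ℝ) ≤ q} ∩ {f | r < klBer ((∑ i, f i) / (k:ℝ)) q})) := by
      intro f hf
      by_cases hfA : f ∈ A
      · right
        have hnkl : r < klBer ((∑ i, f i) / (k:ℝ)) q := by
          by_contra h
          push_neg at h
          exact hf ⟨hfA, h⟩
        rcases le_total q ((∑ i, f i) / (k:ℝ)) with h | h
        · exact Or.inl ⟨⟨hfA, h⟩, hnkl⟩
        · exact Or.inr ⟨⟨hfA, h⟩, hnkl⟩
      · exact Or.inl hfA
    have hAc : μ Aᶜ = 0 := by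
      rw [measure_compl hAm (measure_ne_top _ _), hμA, measure_univ]
      simp
    calc μ Gᶜ ≤ μ (Aᶜ ∪ _) := measure_mono hsubc
      _ ≤ μ Aᶜ + μ _ := measure_union_le _ _
      _ ≤ 0 + (ENNReal.ofReal (δ/4) + ENNReal.ofReal (δ/4)) := by
          rw [hAc]
          exact add_le_add le_rfl (le_trans (measure_union_le _ _) (add_le_add hup hdown))
      _ = ENNReal.ofReal (δ/4) + ENNReal.ofReal (δ/4) := by rw [zero_add]
      _ = ENNReal.ofReal (δ/4 + δ/4) := (ENNReal.ofReal_add (by linarith) (by linarith)).symm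
      _ ≤ ENNReal.ofReal δ := ENNReal.ofReal_le_ofReal (by linarith)
  have hPG : ENNReal.ofReal (1 - δ) ≤ μ G := by
    have h3 : μ G = 1 - μ Gᶜ := by
      rw [measure_compl hGm (measure_ne_top _ _), measure_univ,
        ENNReal.sub_sub_cancel ENNReal.one_ne_top prob_le_one]
    rw [h3]
    calc ENNReal.ofReal (1 - δ) = 1 - ENNReal.ofReal δ := by
          rw [← ENNReal.ofReal_one, ← ENNReal.ofReal_sub _ hδ0.le]
      _ ≤ 1 - μ Gᶜ := tsub_le_tsub_left hcompl 1
  calc ENNReal.ofReal (1 - δ) ≤ μ G := hPG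
    _ = P (T ⁻¹' G) := hmap.symm
    _ ≤ P _ := measure_mono hsub
end
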